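/- arXiv:2001.03320 — 5 statements merged into one kernel-verified Lean document; each statement's English description precedes it below -/
import Mathlib

section
/- For every t with |t| ≤ π, D̂(t) has a unique complex square root s with positive real part, and this root satisfies |s − (1 + γ − βe^{it})| ≤ 5.81γ. -/
open Complex

noncomputable section

/-- `e^{a i t}` -/
def expi (a : ℂ) (t : ℝ) : ℂ := Complex.exp (a * Complex.I * (t : ℂ))

/-- `e^{it}` -/
def eit (t : ℝ) : ℂ := expi 1 t

/-- `D̂(t) = (1 − γ + βe^{it})² − 4e^{it}(β − γ(1−α))` -/
def Dhat (α β γ : ℝ) (t : ℝ) : ℂ :=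
  (1 - (γ : ℂ) + (β : ℂ) * eit t) ^ 2 - 4 * eit t * ((β : ℂ) - (γ : ℂ) * (1 - (α : ℂ)))

/-- The square root of `D̂(t)` with positive real part (junk value `0` if none exists). -/
def sqrtD (α β γ : ℝ) (t : ℝ) : ℂ :=
  letI := Classical.propDecidable (∃ s : ℂ, s ^ 2 = Dhat α β γ t ∧ 0 < s.re)
  if h : ∃ s : ℂ, s ^ 2 = Dhat α β γ t ∧ 0 < s.re then h.choose else 0

def Lam1 (α β γ : ℝ) (t : ℝ) : ℂ := (1 - (γ : ℂ) + (β : ℂ) * eit t + sqrtD α β γ t) / 2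

def Lam2 (α β γ : ℝ) (t : ℝ) : ℂ := (1 - (γ : ℂ) + (β : ℂ) * eit t - sqrtD α β γ t) / 2

/-- Common numerator of `Ŵ₁, Ŵ₂, V̂, V̂₁, V̂₂` with `L` in place of `Λ_j` (resp. `Δ̂`). -/
def Wnum (α β γ : ℝ) (d : ℕ) (L : ℂ) (t : ℝ) : ℂ :=
  (expi ((d : ℂ) + 1) t - 1) * ((β : ℂ) - (γ : ℂ) * (1 - (α : ℂ)))
    - (expi (d : ℂ) t - 1) * L
    + (eit t - 1) * ((γ : ℂ) * L - (β : ℂ) + (γ : ℂ) * (1 - (α : ℂ)))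

def W1denom (α β γ : ℝ) (d : ℕ) (t : ℝ) : ℂ :=
  (Lam1 α β γ t - expi (d : ℂ) t) * sqrtD α β γ t

def W2denom (α β γ : ℝ) (d : ℕ) (t : ℝ) : ℂ :=
  -((Lam2 α β γ t - expi (d : ℂ) t) * sqrtD α β γ t)

def W1 (α β γ : ℝ) (d : ℕ) (t : ℝ) : ℂ :=
  Wnum α β γ d (Lam1 α β γ t) t / W1denom α β γ d t

def W2 (α β γ : ℝ) (d : ℕ) (t : ℝ) : ℂ :=
  Wnum α β γ d (Lam2 α β γ t) t / W2denom α β γ d t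

def W3denom (α β γ : ℝ) (d : ℕ) (t : ℝ) : ℂ :=
  (expi ((d : ℂ) - 1) t - (β : ℂ)) * (expi (d : ℂ) t - (1 - (γ : ℂ)))
    - (γ : ℂ) * (1 - (α : ℂ) - (β : ℂ))

def W3 (α β γ : ℝ) (d : ℕ) (t : ℝ) : ℂ :=
  (α : ℂ) * (γ : ℂ) * expi (d : ℂ) t / W3denom α β γ d t

def Hhat (β : ℝ) (t : ℝ) : ℂ := (1 - (β : ℂ)) * eit t / (1 - (β : ℂ) * eit t)

def Psihat (α β : ℝ) (t : ℝ) : ℂ :=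
  (1 - (α : ℂ) - (β : ℂ)) * eit t / (1 - (β : ℂ) * eit t)

def A1 (α β γ : ℝ) (t : ℝ) : ℂ :=
  (1 - (β : ℂ)) * (Psihat α β t - 1) / (1 + (γ : ℂ) - (β : ℂ))

def A2 (α β γ : ℝ) (t : ℝ) : ℂ :=
  -((β : ℂ) * (1 - (β : ℂ)) * (Hhat β t - 1) * (Psihat α β t - 1)) / (1 + (γ : ℂ) - (β : ℂ)) ^ 2

def A3 (α β γ : ℝ) (t : ℝ) : ℂ :=
  (β : ℂ) ^ 2 * (1 - (β : ℂ)) * (Hhat β t - 1) ^ 2 * (Psihat α β t - 1)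
    / (1 + (γ : ℂ) - (β : ℂ)) ^ 3

def A4 (α β γ : ℝ) (t : ℝ) : ℂ :=
  -((1 - (β : ℂ)) ^ 3 * (Psihat α β t - 1) ^ 2)
    / ((1 + (γ : ℂ) - (β : ℂ)) ^ 3 * (1 - (β : ℂ) * eit t))

def A5 (α β γ : ℝ) (t : ℝ) : ℂ :=
  3 * (β : ℂ) * (1 - (β : ℂ)) ^ 3 * (Psihat α β t - 1) ^ 2 * (Hhat β t - 1)
    / ((1 + (γ : ℂ) - (β : ℂ)) ^ 4 * (1 - (β : ℂ) * eit t))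

def A6 (α β γ : ℝ) (t : ℝ) : ℂ :=
  2 * (1 - (β : ℂ)) ^ 5 * (Psihat α β t - 1) ^ 3
    / ((1 + (γ : ℂ) - (β : ℂ)) ^ 5 * (1 - (β : ℂ) * eit t) ^ 2)

def Ahat (α β γ : ℝ) (t : ℝ) : ℂ :=
  1 + A1 α β γ t * (γ : ℂ) + (A2 α β γ t + A4 α β γ t) * (γ : ℂ) ^ 2
    + (A3 α β γ t + A5 α β γ t + A6 α β γ t) * (γ : ℂ) ^ 3

def DeltaHat (α β γ : ℝ) (t : ℝ) : ℂ := 1 + A1 α β γ t * (γ : ℂ)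

def Delta1Hat (α β γ : ℝ) (t : ℝ) : ℂ :=
  1 + A1 α β γ t * (γ : ℂ) + (A2 α β γ t + A4 α β γ t) * (γ : ℂ) ^ 2

def Ghat (α β γ : ℝ) (t : ℝ) : ℂ :=
  Complex.exp (Ahat α β γ t - 1
    - (A1 α β γ t ^ 2 * (γ : ℂ) ^ 2
        + 2 * A1 α β γ t * (A2 α β γ t + A4 α β γ t) * (γ : ℂ) ^ 3) / 2
    + A1 α β γ t ^ 3 * (γ : ℂ) ^ 3 / 3)

def G1hat (α β γ : ℝ) (t : ℝ) : ℂ :=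
  Complex.exp (A1 α β γ t * (γ : ℂ)
    + (A2 α β γ t + A4 α β γ t - A1 α β γ t ^ 2 / 2) * (γ : ℂ) ^ 2)

def Vhat (α β γ : ℝ) (d : ℕ) (t : ℝ) : ℂ :=
  Wnum α β γ d (DeltaHat α β γ t) t /
    ((Ahat α β γ t - expi (d : ℂ) t)
      * (2 * DeltaHat α β γ t - 1 + (γ : ℂ) - (β : ℂ) * eit t))

def V1hat (α β γ : ℝ) (d : ℕ) (t : ℝ) : ℂ :=
  Wnum α β γ d (DeltaHat α β γ t) t /
    ((Delta1Hat α β γ t - expi (d : ℂ) t)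
      * (2 * DeltaHat α β γ t - 1 + (γ : ℂ) - (β : ℂ) * eit t))

def V2hat (α β γ : ℝ) (d : ℕ) (t : ℝ) : ℂ :=
  Wnum α β γ d (DeltaHat α β γ t) t /
    ((Delta1Hat α β γ t - expi (d : ℂ) t)
      * (2 * Delta1Hat α β γ t - 1 + (γ : ℂ) - (β : ℂ) * eit t))

/-- `f(1) = 0, f(2) = 1, f(3) = d` (states indexed `0,1,2`). -/
def fval (d : ℕ) : Fin 3 → ℤ := ![0, 1, (d : ℤ)]

/-- Transition matrix of the Markov chain. -/
def Pmat (α β γ : ℝ) : Fin 3 → Fin 3 → ℝ :=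
  ![![1 - γ, γ, 0], ![1 - α - β, β, α], ![0, 0, 1]]

/-- The path `(ξ₀, ξ₁, …, ξ_n)` obtained by prepending the initial (healthy) state. -/
def path (n : ℕ) (s : Fin n → Fin 3) : Fin (n + 1) → Fin 3 := Fin.cons 0 s

/-- `F_n{m}`: the mass the distribution of `f(ξ₁) + ⋯ + f(ξ_n)` puts on `m`,
for the chain started at the healthy state `0`. -/
def Fmass (α β γ : ℝ) (d n : ℕ) (m : ℤ) : ℝ :=
  ∑ s ∈ Finset.univ.filter (fun s : Fin n → Fin 3 => (∑ k, fval d (s k)) = m),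
    ∏ k : Fin n, Pmat α β γ (path n s k.castSucc) (path n s k.succ)

/-- The characteristic function `Σ_{m ∈ ℤ} F_n{m} e^{imt}` of `F_n`. -/
def charFn (α β γ : ℝ) (d n : ℕ) (t : ℝ) : ℂ :=
  ∑' m : ℤ, (Fmass α β γ d n m : ℂ) * expi (m : ℂ) t

/-- Mass at `k ∈ ℤ` of the signed measure associated with the Fourier transform `Mhat`. -/
def massOf (Mhat : ℝ → ℂ) (k : ℤ) : ℂ :=
  (1 / (2 * Real.pi)) *
    ∫ t in (-Real.pi)..Real.pi, Complex.exp (-(k : ℂ) * Complex.I * (t : ℂ)) * Mhat t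

/-- Fourier transform of the signed measure `GⁿV + E`. -/
def approxGnVE (α β γ : ℝ) (d n : ℕ) (t : ℝ) : ℂ :=
  Ghat α β γ t ^ n * Vhat α β γ d t + expi ((n : ℂ) * (d : ℂ)) t * W3 α β γ d t

/-- Fourier transform of the signed measure `G₁ⁿV₁ + E`. -/
def approxG1nV1E (α β γ : ℝ) (d n : ℕ) (t : ℝ) : ℂ :=
  G1hat α β γ t ^ n * V1hat α β γ d t + expi ((n : ℂ) * (d : ℂ)) t * W3 α β γ d t

/-- Fourier transform of the signed measure `G₁ⁿV₂ + E`. -/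
def approxG1nV2E (α β γ : ℝ) (d n : ℕ) (t : ℝ) : ℂ :=
  G1hat α β γ t ^ n * V2hat α β γ d t + expi ((n : ℂ) * (d : ℂ)) t * W3 α β γ d t

/-- Fourier transform of the signed measure `E`. -/
def approxE (α β γ : ℝ) (d n : ℕ) (t : ℝ) : ℂ :=
  expi ((n : ℂ) * (d : ℂ)) t * W3 α β γ d t

/-- Mass at `k` of the difference `F_n − M`, where `M` has Fourier transform `Mhat`. -/
def diffMass (α β γ : ℝ) (d n : ℕ) (Mhat : ℝ → ℂ) (k : ℤ) : ℂ :=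
  (Fmass α β γ d n k : ℂ) - massOf Mhat k

/-- Condition (C) of the paper. -/
def condC (C₀ α β γ : ℝ) : Prop :=
  0 < α ∧ α < 1 ∧ 0 < β ∧ β < 1 ∧ 0 < γ ∧ γ < 1 ∧
    β ≤ 0.15 ∧ γ ≤ 0.05 ∧ α ≤ C₀ ∧ α + β < 1

private lemma sqb_aux (D w : ℂ) (γ : ℝ) (hγ0 : 0 < γ)
    (hX : ‖w ^ 2 - D‖ ≤ 8 * γ) (hwre : 0.85 ≤ w.re) (hDre : 0.3 ≤ D.re) :
    ∀ s : ℂ, s ^ 2 = D → 0 < s.re → ‖s - w‖ ≤ 5.81 * γ := by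
  intro s hs hsre
  have hsre2 : (s ^ 2).re = s.re ^ 2 - s.im ^ 2 := by rw [sq, Complex.mul_re]; ring
  have hsre' : (0.547 : ℝ) ≤ s.re := by
    have h1 : (0.3 : ℝ) ≤ s.re ^ 2 - s.im ^ 2 := by rw [← hsre2, hs]; exact hDre
    nlinarith [sq_nonneg s.im]
  have key : (s - w) * (s + w) = D - w ^ 2 := by linear_combination hs
  have hnorm : ‖s - w‖ * ‖s + w‖ ≤ 8 * γ := by
    rw [← norm_mul, key, norm_sub_rev]; exact hX
  have hsw : 1.397 ≤ ‖s + w‖ := by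
    have h1 : (s + w).re ≤ ‖s + w‖ := by
      exact Complex.re_le_norm _
    simp only [Complex.add_re] at h1
    linarith
  nlinarith [norm_nonneg (s - w)]

/-- existence and uniqueness of the square root of `D̂(t)` with positive
real part, and the short expansion `√D̂(t) = 1 + γ − βe^{it} + 5.81θγ`. -/
theorem stmt1 (C₀ : ℝ) (hC₀ : C₀ ∈ Set.Ioo (0 : ℝ) 1)
    (α β γ : ℝ) (h : condC C₀ α β γ) (t : ℝ) (ht : |t| ≤ Real.pi) :
    (∃! s : ℂ, s ^ 2 = Dhat α β γ t ∧ 0 < s.re) ∧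
    ∀ s : ℂ, s ^ 2 = Dhat α β γ t → 0 < s.re →
      ‖s - (1 + (γ : ℂ) - (β : ℂ) * eit t)‖ ≤ 5.81 * γ := by
  obtain ⟨hα0, hα1, hβ0, hβ1, hγ0, hγ1, hβ, hγ, hαC, hαβ⟩ := h
  have he : ‖eit t‖ = 1 := by
    simp [eit, expi, Complex.norm_exp]
  have hee : eit t = Real.cos t + Real.sin t * I := by
    rw [eit, expi, show (1:ℂ) * I * (t:ℂ) = (t:ℂ) * I by ring, Complex.exp_mul_I,
      ← Complex.ofReal_cos, ← Complex.ofReal_sin]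
  set e := eit t with hedef
  set w : ℂ := 1 + (γ:ℂ) - (β:ℂ) * e with hwdef
  have hD : Dhat α β γ t = w ^ 2 - 4*(γ:ℂ)*(1 - (1-(α:ℂ))*e) := by
    simp only [Dhat, hwdef, ← hedef]; ring
  have hwre : w.re = 1 + γ - β * Real.cos t := by
    rw [hwdef, hee]
    simp [Complex.add_re, Complex.sub_re, Complex.mul_re, Complex.cos_ofReal_re, Complex.sin_ofReal_im, Complex.cos_ofReal_im, Complex.sin_ofReal_re]
  have hwim : w.im = -(β * Real.sin t) := by
    rw [hwdef, hee]
    simp [Complex.add_im, Complex.sub_im, Complex.mul_im, Complex.cos_ofReal_re, Complex.sin_ofReal_im, Complex.cos_ofReal_im, Complex.sin_ofReal_re]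
  have hcos := Real.cos_le_one t
  have hcos' := Real.neg_one_le_cos t
  have hsin : Real.sin t ^ 2 ≤ 1 := Real.sin_sq_le_one t
  -- ‖w² - D̂‖ ≤ 8γ
  have hXnorm : ‖w ^ 2 - Dhat α β γ t‖ ≤ 8 * γ := by
    have h4 : w ^ 2 - Dhat α β γ t = 4*(γ:ℂ)*(1 - (1-(α:ℂ))*e) := by rw [hD]; ring
    rw [h4]
    have h1 : ‖(1:ℂ) - (1-(α:ℂ))*e‖ ≤ 2 := by
      calc ‖(1:ℂ) - (1-(α:ℂ))*e‖ ≤ ‖(1:ℂ)‖ + ‖(1-(α:ℂ))*e‖ := norm_sub_le _ _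
        _ = 1 + |1 - α| := by
            rw [norm_mul, he, norm_one]
            rw [show (1:ℂ) - (α:ℂ) = ((1-α : ℝ):ℂ) by push_cast; ring,
              Complex.norm_real]
            simp [Real.norm_eq_abs]
        _ ≤ 2 := by rw [_root_.abs_of_nonneg (by linarith)]; linarith
    rw [norm_mul, norm_mul]
    have h2 : ‖(4:ℂ)‖ = 4 := by norm_num
    rw [h2, Complex.norm_real, Real.norm_eq_abs, _root_.abs_of_pos hγ0]
    nlinarith [norm_nonneg ((1:ℂ) - (1-(α:ℂ))*e)]
  -- Re D̂ ≥ 0.3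
  have hw2re : (w ^ 2).re = w.re ^ 2 - w.im ^ 2 := by
    rw [sq, Complex.mul_re]; ring
  have hwre_ge : 1 + γ - β ≤ w.re := by rw [hwre]; nlinarith
  have hwre_ge' : (0.85 : ℝ) ≤ w.re := by linarith
  have hw2re_ge : 1 - 2*β ≤ (w ^ 2).re := by
    rw [hw2re, hwre, hwim]
    have h1 : 1 - β ≤ 1 + γ - β * Real.cos t := by nlinarith
    have h2 : (1-β)^2 ≤ (1 + γ - β * Real.cos t)^2 :=
      pow_le_pow_left₀ (by linarith) h1 2
    have h3 : β^2 * Real.sin t ^ 2 ≤ β^2 := by nlinarith [sq_nonneg β]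
    nlinarith
  have hDre : 0.3 ≤ (Dhat α β γ t).re := by
    have h1 : (w ^ 2 - Dhat α β γ t).re ≤ 8 * γ :=
      le_trans (Complex.re_le_norm _) (by exact hXnorm)
    simp only [Complex.sub_re] at h1
    linarith
  have hDre' : 0 < (Dhat α β γ t).re := by linarith
  have hDne : Dhat α β γ t ≠ 0 := by
    intro h0; rw [h0] at hDre'; simp at hDre'
  have hbound := sqb_aux (Dhat α β γ t) w γ hγ0 hXnorm hwre_ge' hDre
  -- the principal root
  have hsq0 : (Dhat α β γ t ^ ((1:ℂ)/2)) ^ 2 = Dhat α β γ t := by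
    rw [sq, ← Complex.cpow_add _ _ hDne]; norm_num
  have hs0re : 0 < (Dhat α β γ t ^ ((1:ℂ)/2)).re := by
    rw [Complex.cpow_def_of_ne_zero hDne, Complex.exp_re]
    have harg : |Complex.arg (Dhat α β γ t)| < Real.pi / 2 :=
      Complex.abs_arg_lt_pi_div_two_iff.mpr (Or.inl hDre')
    have him : (Complex.log (Dhat α β γ t) * ((1:ℂ)/2)).im
        = Complex.arg (Dhat α β γ t) / 2 := by
      simp [Complex.mul_im, Complex.log_im]; ring
    rw [him]
    have h2 := abs_lt.mp harg
    have hpi := Real.pi_pos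
    have hc : 0 < Real.cos (Complex.arg (Dhat α β γ t) / 2) :=
      Real.cos_pos_of_mem_Ioo ⟨by linarith, by linarith⟩
    positivity
  refine ⟨⟨Dhat α β γ t ^ ((1:ℂ)/2), ⟨hsq0, hs0re⟩, ?_⟩, fun s hs hsre => hbound s hs hsre⟩
  rintro s ⟨hs, hsre⟩
  have hdiff : (s - Dhat α β γ t ^ ((1:ℂ)/2)) * (s + Dhat α β γ t ^ ((1:ℂ)/2)) = 0 := by
    linear_combination hs - hsq0
  rcases mul_eq_zero.mp hdiff with h0 | h0
  · exact sub_eq_zero.mp h0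
  · exfalso
    have hse : s = -(Dhat α β γ t ^ ((1:ℂ)/2)) := by linear_combination h0
    have : s.re = -(Dhat α β γ t ^ ((1:ℂ)/2)).re := by rw [hse]; simp
    linarith
end
end

section
/- For every t with |t| ≤ π, |Λ₂(t)| ≤ β + 4γ; in particular |Λ₂(t)| ≤ 0.35. -/
open Complex

noncomputable section

/-- Any complex number with positive real part has a square root with positive real part. -/
lemma exists_sqrt_pos_re (D : ℂ) (hD : 0 < D.re) :
    ∃ s : ℂ, s ^ 2 = D ∧ 0 < s.re := by
  have hD0 : D ≠ 0 := by
    intro h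
    rw [h] at hD
    simp at hD
  have h2 : (2 : ℕ) ≠ 0 := by norm_num
  have hsq : (D ^ (((2 : ℕ) : ℂ)⁻¹)) ^ (2 : ℕ) = D :=
    Complex.cpow_nat_inv_pow D h2
  set s0 : ℂ := D ^ (((2 : ℕ) : ℂ)⁻¹) with hs0
  rcases lt_trichotomy 0 s0.re with hpos | hzero | hneg
  · exact ⟨s0, hsq, hpos⟩
  · exfalso
    have : D.re = s0.re ^ 2 - s0.im ^ 2 := by
      rw [← hsq]; simp [pow_two, Complex.mul_re]
    rw [this, ← hzero] at hD
    nlinarith [sq_nonneg s0.im]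
  · exact ⟨-s0, by rw [neg_pow]; simpa using hsq, by simpa using hneg⟩

/-- `|Λ₂(t)| ≤ β + 4γ ≤ 0.35`. -/
theorem stmt2 (C₀ : ℝ) (hC₀ : C₀ ∈ Set.Ioo (0 : ℝ) 1)
    (α β γ : ℝ) (h : condC C₀ α β γ) (t : ℝ) (ht : |t| ≤ Real.pi) :
    ‖Lam2 α β γ t‖ ≤ β + 4 * γ ∧ ‖Lam2 α β γ t‖ ≤ 0.35 := by
  obtain ⟨hα0, hα1, hβ0, hβ1, hγ0, hγ1, hβ, hγ, hαC, hαβ⟩ := h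
  set e := eit t with he
  have hnorme : ‖e‖ = 1 := by
    simp [he, eit, expi, Complex.norm_exp]
  have here : |e.re| ≤ 1 := by
    calc |e.re| ≤ ‖e‖ := Complex.abs_re_le_norm e
    _ = 1 := by rw [hnorme]
  have heim : |e.im| ≤ 1 := by
    calc |e.im| ≤ ‖e‖ := Complex.abs_im_le_norm e
    _ = 1 := by rw [hnorme]
  set R : ℂ := 1 - (γ : ℂ) - (β : ℂ) * e with hR
  set E : ℂ := ((4 * γ * (1 - α - β) : ℝ) : ℂ) * e with hE
  have hD : Dhat α β γ t = R ^ 2 + E := by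
    simp only [Dhat, ← he, hR, hE]
    push_cast
    ring
  have hRre : (0.8 : ℝ) ≤ R.re := by
    have hre : R.re = 1 - γ - β * e.re := by simp [hR]
    rw [hre]
    nlinarith [abs_le.1 here]
  have hRim : |R.im| ≤ 0.15 := by
    have him : R.im = -(β * e.im) := by simp [hR]
    rw [him, abs_neg, abs_mul, abs_of_pos hβ0]
    nlinarith [abs_le.1 heim, abs_nonneg e.im]
  have hEnorm : ‖E‖ ≤ 4 * γ := by
    rw [hE, norm_mul, hnorme, mul_one, Complex.norm_real, Real.norm_eq_abs,
      _root_.abs_of_nonneg (by nlinarith : (0:ℝ) ≤ 4 * γ * (1 - α - β))]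
    nlinarith
  have hEre : |E.re| ≤ 4 * γ := by
    calc |E.re| ≤ ‖E‖ := Complex.abs_re_le_norm E
    _ ≤ 4 * γ := by exact hEnorm
  have hDre : 0 < (Dhat α β γ t).re := by
    have : (Dhat α β γ t).re = R.re ^ 2 - R.im ^ 2 + E.re := by
      rw [hD]; simp [pow_two, Complex.mul_re]
    rw [this]
    nlinarith [abs_le.1 hRim, abs_le.1 hEre]
  have hex : ∃ s : ℂ, s ^ 2 = Dhat α β γ t ∧ 0 < s.re :=
    exists_sqrt_pos_re _ hDre
  have hsval : sqrtD α β γ t = hex.choose := by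
    rw [sqrtD]
    exact dif_pos hex
  set s := sqrtD α β γ t with hsdef
  have hs2 : s ^ 2 = Dhat α β γ t := by rw [hsval]; exact hex.choose_spec.1
  have hsre : 0 < s.re := by rw [hsval]; exact hex.choose_spec.2
  have hfac : (s - R) * (s + R) = E := by
    have := hs2
    rw [hD] at this
    linear_combination this
  have hsum : (0.8 : ℝ) ≤ ‖s + R‖ := by
    have h1 : (s + R).re ≤ ‖s + R‖ := Complex.re_le_norm _
    have h2 : (s + R).re = s.re + R.re := by simp
    linarith
  have hdiff : ‖s - R‖ ≤ 5 * γ := by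
    have h1 : ‖s - R‖ * ‖s + R‖ = ‖E‖ := by rw [← norm_mul, hfac]
    nlinarith [norm_nonneg (s - R), norm_nonneg (s + R)]
  have hL : Lam2 α β γ t = (β : ℂ) * e + (R - s) / 2 := by
    rw [Lam2, ← hsdef, ← he, hR]
    ring
  have hmain : ‖Lam2 α β γ t‖ ≤ β + 4 * γ := by
    rw [hL]
    calc ‖(β : ℂ) * e + (R - s) / 2‖ ≤ ‖(β : ℂ) * e‖ + ‖(R - s) / 2‖ :=
          norm_add_le _ _
    _ = β + ‖R - s‖ / 2 := by
          rw [norm_mul, hnorme, mul_one, Complex.norm_real, Real.norm_eq_abs,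
            abs_of_pos hβ0, norm_div]
          norm_num
    _ ≤ β + 4 * γ := by
          rw [norm_sub_rev]
          linarith
  exact ⟨hmain, by linarith⟩
end
end

section
/- For every t with |t| ≤ π, |Λ₁(t)| ≤ 1 + 0.4(1−α)γ·Re(Ĥ(t)−1) − 0.2αγ; consequently |Λ₁(t)| ≤ exp(0.4(1−α)γ·Re(Ĥ(t)−1) − 0.2αγ). -/
open Complex

noncomputable section

set_option maxHeartbeats 1600000 in
lemma schur_bound (b c lam : ℂ) (r : ℝ) (hr : 0 < r)
    (hroot : lam^2 - b*lam + c = 0)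
    (hc : ‖c‖ < r^2)
    (hmain : r * ‖b*(r:ℂ)^2 - (starRingEnd ℂ) b * c‖ ≤ r^4 - ‖c‖^2) :
    ‖lam‖ ≤ r := by
  by_contra hcon
  push_neg at hcon
  have hlam0 : lam ≠ 0 := by
    intro h0
    rw [h0, norm_zero] at hcon; linarith
  set μ : ℂ := c / lam with hμ
  have hb : b = lam + μ := by
    rw [hμ, add_div' _ _ _ hlam0, eq_div_iff hlam0]
    linear_combination -hroot
  have hcμ : c = lam * μ := by rw [hμ, mul_div_assoc', eq_div_iff hlam0]; ring
  set L : ℝ := ‖lam‖ with hL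
  set m : ℝ := ‖μ‖ with hm
  have hmL : m * L = ‖c‖ := by rw [hcμ, norm_mul]; ring
  have hLr : r < L := hcon
  have hm0 : 0 ≤ m := norm_nonneg _
  have hmr : m < r := by nlinarith [norm_nonneg c]
  have h1 : (starRingEnd ℂ) lam * lam = ((L^2 : ℝ):ℂ) := by
    rw [mul_comm, Complex.mul_conj]
    norm_cast
    simp only [Complex.normSq_eq_norm_sq, hL]
  have h2 : (starRingEnd ℂ) μ * μ = ((m^2 : ℝ):ℂ) := by
    rw [mul_comm, Complex.mul_conj]
    norm_cast
    simp only [Complex.normSq_eq_norm_sq, hm]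
  have key : b*(r:ℂ)^2 - (starRingEnd ℂ) b * c
      = lam * ((r^2 - m^2 : ℝ):ℂ) + μ * ((r^2 - L^2 : ℝ):ℂ) := by
    rw [hb, hcμ, map_add]
    push_cast at h1 h2 ⊢
    linear_combination (-μ) * h1 + (-lam) * h2
  have hub : L*(r^2-m^2) - m*(L^2-r^2) ≤ ‖b*(r:ℂ)^2 - (starRingEnd ℂ) b * c‖ := by
    rw [key]
    have t1 : ‖lam * ((r^2 - m^2 : ℝ):ℂ)‖ = L * (r^2 - m^2) := by
      rw [norm_mul, Complex.norm_real, Real.norm_eq_abs, _root_.abs_of_nonneg (by nlinarith : (0:ℝ) ≤ r^2 - m^2)]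
    have t2 : ‖μ * ((r^2 - L^2 : ℝ):ℂ)‖ = m * (L^2 - r^2) := by
      rw [norm_mul, Complex.norm_real, Real.norm_eq_abs, abs_of_nonpos (by nlinarith : (r^2 - L^2 : ℝ) ≤ 0)]
      ring
    calc L*(r^2-m^2) - m*(L^2-r^2)
        = ‖lam * ((r^2 - m^2 : ℝ):ℂ)‖ - ‖-(μ * ((r^2 - L^2 : ℝ):ℂ))‖ := by
          rw [norm_neg, t1, t2]
      _ ≤ ‖lam * ((r^2 - m^2 : ℝ):ℂ) - -(μ * ((r^2 - L^2 : ℝ):ℂ))‖ := norm_sub_norm_le _ _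
      _ = ‖lam * ((r^2 - m^2 : ℝ):ℂ) + μ * ((r^2 - L^2 : ℝ):ℂ)‖ := by rw [sub_neg_eq_add]
  have hfac : 0 < (r - m)*(L - r)*(r^2 - m*L) := by
    apply mul_pos (mul_pos (by linarith) (by linarith))
    nlinarith
  rw [← hmL] at hmain hc
  nlinarith [mul_le_mul_of_nonneg_left hub hr.le, norm_nonneg (b*(r:ℂ)^2 - (starRingEnd ℂ) b * c)]

set_option maxHeartbeats 1600000 in
lemma core_ineq (α β γ u v r q : ℝ)
    (hα0 : 0 < α) (hα1 : α < 1) (hβ0 : 0 < β) (hβ : β ≤ 0.15)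
    (hγ0 : 0 < γ) (hγ : γ ≤ 0.05) (hu0 : 0 ≤ u) (hu2 : u ≤ 2)
    (hv : v * ((1-β)^2 + 2*β*u) = 0.4*(1-α)*γ*(1+β)*u)
    (hr : r = 1 - (0.2*α*γ + v)) (hq : q = β - γ*(1-α)) :
    0.96 ≤ r ∧ |q| < r^2 ∧
    r^2*(((1-γ)*r^2 - q*β)^2 + (β*r^2 - q*(1-γ))^2
        + 2*((1-γ)*r^2 - q*β)*(β*r^2 - q*(1-γ))*(1-u)) ≤ (r^4 - q^2)^2 := by
  have hαγ : 0 ≤ α*γ := mul_nonneg hα0.le hγ0.le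
  have hγα : 0 ≤ γ*(1-α) := mul_nonneg hγ0.le (by linarith)
  have hγα' : γ*(1-α) ≤ γ := by nlinarith only [hαγ, hγ0]
  set Dn : ℝ := (1-β)^2 + 2*β*u with hDn
  clear_value Dn
  have hβu : 0 ≤ β*u := mul_nonneg hβ0.le hu0
  have hDn0 : 0.7225 ≤ Dn := by
    rw [hDn]; nlinarith only [hβu, hβ, hβ0, sq_nonneg (1-β)]
  have hvDn : 0 ≤ 0.4*(1-α)*γ*(1+β)*u := by
    have := mul_nonneg (mul_nonneg (mul_nonneg (by linarith : (0:ℝ) ≤ 0.4*(1-α)) hγ0.le) (by linarith : (0:ℝ) ≤ 1+β)) hu0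
    linarith only [this]
  have hv0 : 0 ≤ v := by nlinarith only [hv, hvDn, hDn0]
  have h2Dn : (1+β)*u ≤ 2*Dn := by
    rw [hDn]
    nlinarith only [hβu, mul_nonneg hβ0.le (by linarith : (0:ℝ) ≤ 2-u), hβ0, hu2, hβ]
  have hv8 : v ≤ 0.8*γ*(1-α) := by
    have h1 : v*Dn ≤ 0.8*γ*(1-α)*Dn := by
      rw [hv]
      nlinarith only [mul_le_mul_of_nonneg_left h2Dn (by nlinarith only [hγ0, hα1] : (0:ℝ) ≤ 0.4*(1-α)*γ)]
    nlinarith only [h1, hDn0, hv0]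
  set ε : ℝ := 0.2*α*γ + v with hε
  clear_value ε
  have hε0 : 0 ≤ ε := by rw [hε]; linarith only [hαγ, hv0]
  have hε4 : ε ≤ 0.04 := by rw [hε]; nlinarith only [hv8, hαγ, hγα', hγ, hγ0]
  have hr96 : 0.96 ≤ r := by rw [hr]; linarith only [hε4]
  have hr1 : r ≤ 1 := by rw [hr]; linarith only [hε0]
  have hr2 : 0.9216 ≤ r^2 := by nlinarith only [hr96, hr1]
  have hr2' : r^2 ≤ 1 := by nlinarith only [hr96, hr1]
  have hq1 : q ≤ 0.15 := by rw [hq]; linarith only [hγα, hβ]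
  have hqb : q ≤ β := by rw [hq]; linarith only [hγα]
  have hq2 : -0.05 ≤ q := by rw [hq]; linarith only [hβ0, hγα', hγ]
  refine ⟨hr96, by rw [abs_lt]; constructor <;> linarith only [hr2, hq1, hq2], ?_⟩
  set A : ℝ := (1-γ)*r^2 - q*β with hA
  clear_value A
  set B : ℝ := β*r^2 - q*(1-γ) with hB
  clear_value B
  have hqβ : q*β ≤ 0.0225 := by
    nlinarith only [mul_le_mul_of_nonneg_right hq1 hβ0.le, hβ, hβ0]
  have hA85 : 0.853 ≤ A := by
    rw [hA]
    nlinarith only [mul_le_mul (by linarith only [hγ] : (0.95:ℝ) ≤ 1-γ) hr2 (by norm_num) (by linarith only [hγ] : (0:ℝ) ≤ 1-γ), hqβ]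
  have hBlb : 0.95*γ*(1-α) + 0.6*β*γ - 2*β*v ≤ B := by
    rw [hB, hq, hr, hε]
    nlinarith only [mul_nonneg hβ0.le (sq_nonneg (0.2*α*γ + v)),
      mul_nonneg (mul_nonneg hβ0.le hγ0.le) (by linarith : (0:ℝ) ≤ 1-α),
      mul_nonneg hγα (by linarith only [hγ] : (0:ℝ) ≤ 0.05 - γ),
      mul_nonneg (mul_nonneg hα0.le hβ0.le) hγ0.le]
  have hX0 : 0 ≤ 0.95*γ*(1-α) + 0.6*β*γ - 2*β*v := by
    nlinarith only [mul_le_mul_of_nonneg_left hv8 (by linarith only [hβ0] : (0:ℝ) ≤ 2*β),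
      mul_nonneg (mul_nonneg hβ0.le hγ0.le) (by linarith : (0:ℝ) ≤ 1-α),
      mul_nonneg (mul_nonneg hγ0.le (by linarith : (0:ℝ) ≤ 1-α)) (by linarith only [hβ] : (0:ℝ) ≤ 0.95 - 1.6*β),
      mul_nonneg hβ0.le hγ0.le]
  have hB0 : 0 ≤ B := le_trans hX0 hBlb
  have hFid : (r^4 - q^2)^2 - r^2*(A^2 + B^2 + 2*A*B*(1-u))
      = (r^2-q)^2*((r^2-(1-γ+β)*r+q)*(r^2+(1-γ+β)*r+q)) + 2*A*B*u*r^2 := by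
    rw [hA, hB]; ring
  have hPid : r^2-(1-γ+β)*r+q = ε^2 + α*γ - ε*(1+γ-β) := by rw [hr, hq, hε]; ring
  set Q : ℝ := r^2+(1-γ+β)*r+q with hQ
  clear_value Q
  have hgr0 : 0.912 ≤ (1-γ+β)*r := by
    nlinarith only [mul_le_mul (by linarith only [hγ, hβ0] : (0.95:ℝ) ≤ 1-γ+β) hr96 (by norm_num) (by linarith only [hγ, hβ0] : (0:ℝ) ≤ 1-γ+β)]
  have hgr1 : (1-γ+β)*r ≤ 1-γ+β :=
    mul_le_of_le_one_right (by linarith only [hγ, hβ0]) hr1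
  have hQ0 : 0 ≤ Q := by rw [hQ]; linarith only [hr2, hgr0, hq2]
  have hQub : Q ≤ 2 + 2*β := by rw [hQ]; linarith only [hr2', hgr1, hqb, hγ0, hβ0]
  set m : ℝ := ε*(1+γ-β) - α*γ - ε^2 with hm
  clear_value m
  rcases le_or_gt m 0 with hm0 | hm0
  · have hP0 : 0 ≤ ε^2 + α*γ - ε*(1+γ-β) := by rw [hm] at hm0; linarith only [hm0]
    have h1 : 0 ≤ (r^2-q)^2*((r^2-(1-γ+β)*r+q)*Q) := by
      rw [hPid]
      exact mul_nonneg (sq_nonneg _) (mul_nonneg hP0 hQ0)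
    have h2 : 0 ≤ 2*A*B*u*r^2 :=
      mul_nonneg (mul_nonneg (mul_nonneg (by linarith only [hA85] : (0:ℝ) ≤ 2*A) hB0) hu0) (sq_nonneg r)
    linarith only [hFid, h1, h2]
  · have hm2 : m ≤ 1.05*v - 0.79*α*γ := by
      rw [hm, hε]
      nlinarith only [mul_nonneg hv0 (by linarith only [hγ, hβ0] : (0:ℝ) ≤ 0.05 - γ + β),
        mul_nonneg hαγ (by linarith only [hγ] : (0:ℝ) ≤ 0.05 - γ),
        mul_nonneg (mul_nonneg hα0.le hβ0.le) hγ0.le,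
        sq_nonneg (0.2*α*γ + v)]
    set K : ℝ := 2*(1+β)*(1.05-β)^2 with hK
    clear_value K
    have hK0 : 0 ≤ K := by
      rw [hK]
      nlinarith only [mul_nonneg (by linarith only [hβ0] : (0:ℝ) ≤ 1+β) (sq_nonneg (1.05-β))]
    have hKub : (r^2-q)^2*Q ≤ K := by
      have h1 : 0 ≤ r^2 - q := by linarith only [hr2, hq1]
      have h2 : r^2 - q ≤ 1.05 - β := by rw [hq]; linarith only [hr2', hγα', hγ]
      have e1 : (r^2-q)^2 ≤ (1.05-β)^2 := by nlinarith only [h1, h2]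
      have e2 := mul_le_mul e1 hQub hQ0 (by nlinarith only [h1, h2] : (0:ℝ) ≤ (1.05-β)^2)
      rw [hK]; nlinarith only [e2]
    have hcore : K*(1.05*v - 0.79*α*γ) ≤ 2*A*B*u*r^2 := by
      have hAr : 1.57 ≤ 2*A*r^2 := by
        nlinarith only [mul_le_mul hA85 hr2 (by norm_num) (by linarith only [hA85] : (0:ℝ) ≤ A)]
      have huB : u*(0.95*γ*(1-α) + 0.6*β*γ - 2*β*v) ≤ u*B :=
        mul_le_mul_of_nonneg_left hBlb hu0
      have hstep : 1.57*(u*(0.95*γ*(1-α) + 0.6*β*γ - 2*β*v)) ≤ 2*A*B*u*r^2 := by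
        calc 1.57*(u*(0.95*γ*(1-α) + 0.6*β*γ - 2*β*v)) ≤ 1.57*(u*B) := by linarith only [huB]
          _ ≤ (2*A*r^2)*(u*B) := mul_le_mul_of_nonneg_right hAr (mul_nonneg hu0 hB0)
          _ = 2*A*B*u*r^2 := by ring
      have hbr : 0 ≤ 1.4915*((1-β)^2 + 2*β*u) - 1.256*β*(1+β)*u - 0.84*(1+β)^2*(1.05-β)^2 := by
        nlinarith only [hβ0, hβ, hu0, hu2,
          mul_nonneg (mul_nonneg hβ0.le (by linarith only [hβ] : (0:ℝ) ≤ 0.15-β)) hu0,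
          hβu, sq_nonneg (1-β),
          mul_nonneg (mul_nonneg hβ0.le hβ0.le) hu0,
          mul_nonneg hβ0.le (by linarith only [hβ] : (0:ℝ) ≤ 0.15-β),
          sq_nonneg β, sq_nonneg (β-0.15),
          mul_nonneg hu0 (by linarith only [hu2] : (0:ℝ) ≤ 2-u)]
      have hid : 1.57*(u*(0.95*γ*(1-α) + 0.6*β*γ - 2*β*v))*Dn
            - (2*(1+β)*(1.05-β)^2)*(1.05*v - 0.79*α*γ)*Dn
          = γ*u*(1-α)*(1.4915*((1-β)^2 + 2*β*u) - 1.256*β*(1+β)*u - 0.84*(1+β)^2*(1.05-β)^2)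
            + 0.942*β*γ*u*Dn + 0.79*(2*(1+β)*(1.05-β)^2)*α*γ*Dn := by
        have hv' := hv
        rw [hDn] at hv'
        rw [hDn]
        linear_combination (-(3.14*β*u) - 1.05*(2*(1+β)*(1.05-β)^2))*hv'
      have hpos : 0 ≤ γ*u*(1-α)*(1.4915*((1-β)^2 + 2*β*u) - 1.256*β*(1+β)*u - 0.84*(1+β)^2*(1.05-β)^2)
            + 0.942*β*γ*u*Dn + 0.79*(2*(1+β)*(1.05-β)^2)*α*γ*Dn := by
        have p1 : 0 ≤ γ*u*(1-α) := mul_nonneg (mul_nonneg hγ0.le hu0) (by linarith)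
        have p2 : 0 ≤ 0.942*β*γ*u*Dn := by
          have := mul_nonneg (mul_nonneg (mul_nonneg hβ0.le hγ0.le) hu0) (by linarith only [hDn0] : (0:ℝ) ≤ Dn)
          linarith only [this]
        have p3 : 0 ≤ 0.79*(2*(1+β)*(1.05-β)^2)*α*γ*Dn := by
          have h6 : (0:ℝ) ≤ 2*(1+β)*(1.05-β)^2 := by
            nlinarith only [mul_nonneg (by linarith only [hβ0] : (0:ℝ) ≤ 1+β) (sq_nonneg (1.05-β))]
          have := mul_nonneg (mul_nonneg (mul_nonneg h6 hα0.le) hγ0.le) (by linarith only [hDn0] : (0:ℝ) ≤ Dn)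
          linarith only [this]
        have p4 := mul_nonneg p1 hbr
        linarith only [p2, p3, p4]
      have hDd : K*(1.05*v - 0.79*α*γ)*Dn ≤ 1.57*(u*(0.95*γ*(1-α) + 0.6*β*γ - 2*β*v))*Dn := by
        rw [hK]; linarith only [hid, hpos]
      have hfin2 : K*(1.05*v - 0.79*α*γ) ≤ 1.57*(u*(0.95*γ*(1-α) + 0.6*β*γ - 2*β*v)) := by
        nlinarith only [hDd, hDn0, hm0, hm2, hK0, hKub, mul_le_mul_of_nonneg_right hKub hm0.le]
      linarith only [hfin2, hstep]
    have hPneg : (r^2-(1-γ+β)*r+q) = -m := by rw [hPid, hm]; ring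
    have hfin : -(K*(1.05*v - 0.79*α*γ)) ≤ (r^2-q)^2*((r^2-(1-γ+β)*r+q)*Q) := by
      rw [hPneg]
      have h3 : (r^2-q)^2*(-m*Q) = -((r^2-q)^2*Q*m) := by ring
      rw [h3]
      have h4 : (r^2-q)^2*Q*m ≤ K*m := mul_le_mul_of_nonneg_right hKub hm0.le
      have h5 : K*m ≤ K*(1.05*v - 0.79*α*γ) := mul_le_mul_of_nonneg_left hm2 hK0
      linarith only [h4, h5]
    linarith only [hFid, hfin, hcore]

set_option maxHeartbeats 1600000 in
/-- `|Λ₁(t)| ≤ 1 + 0.4(1−α)γ Re(Ĥ(t)−1) − 0.2αγ ≤ exp(...)`. -/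
theorem stmt3 (C₀ : ℝ) (hC₀ : C₀ ∈ Set.Ioo (0 : ℝ) 1)
    (α β γ : ℝ) (h : condC C₀ α β γ) (t : ℝ) (ht : |t| ≤ Real.pi) :
    ‖Lam1 α β γ t‖ ≤ 1 + 0.4 * (1 - α) * γ * (Hhat β t - 1).re - 0.2 * α * γ ∧
    ‖Lam1 α β γ t‖ ≤ Real.exp (0.4 * (1 - α) * γ * (Hhat β t - 1).re - 0.2 * α * γ) := by
  obtain ⟨hα0, hα1, hβ0, hβ1, hγ0, hγ1, hβ, hγ, hαC, hαβ⟩ := h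
  set x : ℝ := Real.cos t with hx
  set y : ℝ := Real.sin t with hy
  have hxy : x^2 + y^2 = 1 := by rw [hx, hy]; exact Real.cos_sq_add_sin_sq t
  have hx1 : -1 ≤ x := Real.neg_one_le_cos t
  have hx2 : x ≤ 1 := Real.cos_le_one t
  have he : eit t = (x:ℂ) + (y:ℂ)*Complex.I := by
    rw [eit, expi, show (1:ℂ)*Complex.I*(t:ℂ) = (t:ℂ)*Complex.I by ring,
      Complex.exp_mul_I, ← Complex.ofReal_cos, ← Complex.ofReal_sin]
  have habs : ‖eit t‖ = 1 := by
    rw [eit, expi, show (1:ℂ)*Complex.I*(t:ℂ) = (t:ℂ)*Complex.I by ring,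
      Complex.norm_exp_ofReal_mul_I]
  have hxyC : (x:ℂ)^2 + (y:ℂ)^2 = 1 := by exact_mod_cast hxy
  have hDnpos : (0:ℝ) < (1-β)^2 + 2*β*(1-x) :=
    add_pos_of_pos_of_nonneg (pow_pos (by linarith : (0:ℝ) < 1-β) 2)
      (mul_nonneg (by linarith : (0:ℝ) ≤ 2*β) (by linarith : (0:ℝ) ≤ 1-x))
  have hden : (1:ℂ) - (β:ℂ)*eit t ≠ 0 := by
    rw [he]
    intro h0
    have h1 := congrArg Complex.re h0
    simp at h1
    nlinarith only [h1, mul_le_mul_of_nonneg_left hx2 hβ0.le, hβ, hβ0]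
  have hH1 : Hhat β t - 1 = (eit t - 1)/(1 - (β:ℂ)*eit t) := by
    unfold Hhat
    field_simp
    ring
  have hns : Complex.normSq (1 - (β:ℂ)*eit t) = (1-β)^2 + 2*β*(1-x) := by
    rw [he, Complex.normSq_apply]
    simp
    linear_combination (β^2)*hxy
  have hre_eq : (Hhat β t - 1).re * ((1-β)^2 + 2*β*(1-x)) = (x-1)*(1+β) := by
    rw [hH1, Complex.div_re, hns, he, ← add_div, div_mul_cancel₀ _ hDnpos.ne']
    simp
    linear_combination (-β)*hxy
  set q : ℝ := β - γ*(1-α) with hqd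
  set u : ℝ := 1 - x with hu
  set hre : ℝ := (Hhat β t - 1).re with hhre
  set v : ℝ := -(0.4*(1-α)*γ*hre) with hvd
  have hv : v * ((1-β)^2 + 2*β*u) = 0.4*(1-α)*γ*(1+β)*u := by
    rw [hvd, hu]
    linear_combination (-(0.4*(1-α)*γ)) * hre_eq
  set r : ℝ := 1 + 0.4 * (1 - α) * γ * hre - 0.2 * α * γ with hrd
  have hrv : r = 1 - (0.2*α*γ + v) := by rw [hrd, hvd]; ring
  clear_value x y q u hre v r
  obtain ⟨hr96, hqlt, hmain⟩ :=
    core_ineq α β γ u v r q hα0 hα1 hβ0 hβ hγ0 hγ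
      (by rw [hu]; linarith) (by rw [hu]; linarith) hv hrv hqd
  have hr0 : (0:ℝ) < r := lt_of_lt_of_le (by norm_num) hr96
  set A : ℝ := (1-γ)*r^2 - q*β with hA
  set B : ℝ := β*r^2 - q*(1-γ) with hB
  clear_value A B
  have main1 : ‖Lam1 α β γ t‖ ≤ r := by
    by_cases hex : ∃ s : ℂ, s ^ 2 = Dhat α β γ t ∧ 0 < s.re
    · have hsp : (sqrtD α β γ t) ^ 2 = Dhat α β γ t := by
        unfold sqrtD
        rw [dif_pos hex]
        exact hex.choose_spec.1
      set b : ℂ := 1 - (γ:ℂ) + (β:ℂ)*eit t with hb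
      set c : ℂ := eit t * ((q:ℝ):ℂ) with hcdef
      have hDbc : Dhat α β γ t = b^2 - 4*c := by
        unfold Dhat
        rw [hb, hcdef, hqd]
        push_cast
        ring
      have hlam : Lam1 α β γ t = (b + sqrtD α β γ t)/2 := rfl
      clear_value b c
      have hroot : (Lam1 α β γ t)^2 - b*(Lam1 α β γ t) + c = 0 := by
        rw [hlam]
        linear_combination (hsp.trans hDbc)/4
      have hnc : ‖c‖ = |q| := by
        rw [hcdef, norm_mul, habs, Complex.norm_real, one_mul, Real.norm_eq_abs]
      have hkey : b*(r:ℂ)^2 - (starRingEnd ℂ) b * c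
          = ((A : ℝ):ℂ) + ((B : ℝ):ℂ) * eit t := by
        rw [hA, hB, hb, hcdef, he]
        simp only [map_sub, map_add, map_mul, map_one, Complex.conj_ofReal, Complex.conj_I]
        push_cast
        linear_combination (-(q:ℂ)*(β:ℂ))*hxyC + ((β:ℂ)*(y:ℂ)^2*(q:ℂ))*Complex.I_sq
      have hw2 : ‖b*(r:ℂ)^2 - (starRingEnd ℂ) b * c‖^2 = A^2 + B^2 + 2*A*B*(1-u) := by
        rw [hkey, he, hu, Complex.sq_norm, Complex.normSq_apply]
        simp
        linear_combination (B^2) * hxy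
      have hq4 : q^2 < r^4 := by nlinarith only [abs_nonneg q, _root_.sq_abs q, hqlt, hr96]
      have hsq : (r*‖b*(r:ℂ)^2 - (starRingEnd ℂ) b * c‖)^2 ≤ (r^4 - q^2)^2 := by
        rw [mul_pow, hw2]
        exact hmain
      have hfin : r*‖b*(r:ℂ)^2 - (starRingEnd ℂ) b * c‖ ≤ r^4 - q^2 := by
        nlinarith only [hsq, hq4, mul_nonneg hr0.le (norm_nonneg (b*(r:ℂ)^2 - (starRingEnd ℂ) b * c))]
      have happ := schur_bound b c (Lam1 α β γ t) r hr0 hroot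
        (by rw [hnc]; exact hqlt)
        (by rw [hnc, _root_.sq_abs]; exact hfin)
      exact happ
    · have h0 : sqrtD α β γ t = 0 := by unfold sqrtD; rw [dif_neg hex]
      have hb1 : ‖(1:ℂ) - (γ:ℂ)‖ ≤ 1 := by
        rw [show (1:ℂ) - (γ:ℂ) = ((1 - γ:ℝ):ℂ) by push_cast; ring, Complex.norm_real,
          Real.norm_eq_abs, _root_.abs_of_nonneg (by linarith : (0:ℝ) ≤ 1-γ)]
        linarith
      have hb2 : ‖(β:ℂ)*eit t‖ ≤ 0.15 := by
        rw [norm_mul, habs, mul_one, Complex.norm_real, Real.norm_eq_abs,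
          _root_.abs_of_nonneg hβ0.le]
        exact hβ
      have : ‖Lam1 α β γ t‖ ≤ 0.6 := by
        rw [Lam1, h0, add_zero]
        rw [norm_div]
        have h2 : ‖(2:ℂ)‖ = 2 := by norm_num
        rw [h2]
        have h3 : ‖(1:ℂ) - (γ:ℂ) + (β:ℂ)*eit t‖ ≤ 1.2 :=
          le_trans (norm_add_le _ _) (by linarith)
        linarith
      linarith
  refine ⟨main1, le_trans main1 ?_⟩
  have := Real.add_one_le_exp (0.4 * (1 - α) * γ * hre - 0.2 * α * γ)
  rw [hrd]
  linarith
end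
end

section
/- For every t with |t| ≤ π, |Ŵ₂(t)| ≤ 2(d+1)|e^{it} − 1|. -/
open Complex

noncomputable section

set_option maxHeartbeats 1000000 in
/-- `|Ŵ₂(t)| ≤ 2(d+1)|e^{it} − 1|`. -/
theorem stmt4 (C₀ : ℝ) (hC₀ : C₀ ∈ Set.Ioo (0 : ℝ) 1)
    (α β γ : ℝ) (h : condC C₀ α β γ) (d : ℕ) (hd : 1 ≤ d)
    (t : ℝ) (ht : |t| ≤ Real.pi) :
    ‖W2 α β γ d t‖ ≤ 2 * ((d : ℝ) + 1) * ‖eit t - 1‖ := by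
  obtain ⟨hα, hα1, hβ, hβ1, hγ, hγ1, hβ15, hγ05, hαC, hαβ⟩ := h
  set z : ℂ := eit t with hzdef
  clear_value z
  have hz : ‖z‖ = 1 := by
    simp [hzdef, eit, expi, Complex.norm_exp]
  by_cases hex : ∃ s : ℂ, s ^ 2 = Dhat α β γ t ∧ 0 < s.re
  · -- main case
    have hseq : sqrtD α β γ t = hex.choose := by rw [sqrtD, dif_pos hex]
    obtain ⟨hs2, hsre⟩ := hex.choose_spec
    rw [← hseq] at hs2 hsre
    set s : ℂ := sqrtD α β γ t with hsdef
    clear_value s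
    -- powers of z
    have hpow : ∀ a : ℕ, expi (a : ℂ) t = z ^ a := by
      intro a
      rw [hzdef, eit, expi, expi, ← Complex.exp_nat_mul]
      congr 1; ring
    have hpow1 : expi ((d : ℂ) + 1) t = z ^ (d + 1) := by
      rw [show ((d : ℂ) + 1) = ((d + 1 : ℕ) : ℂ) by push_cast; ring]
      exact hpow (d + 1)
    -- real part of z
    have hzre : |z.re| ≤ 1 := by
      have := Complex.abs_re_le_norm z
      rwa [hz] at this
    have hzre1 : -1 ≤ z.re := (abs_le.mp hzre).1
    have hzre2 : z.re ≤ 1 := (abs_le.mp hzre).2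
    -- the constant c
    set c : ℝ := β - γ * (1 - α) with hcdef
    clear_value c
    have hcC : (β : ℂ) - (γ : ℂ) * (1 - (α : ℂ)) = (c : ℂ) := by
      simp only [hcdef]; push_cast; ring
    have hcnorm : ‖(c : ℂ)‖ ≤ 0.15 := by
      rw [Complex.norm_real, Real.norm_eq_abs, abs_le]
      constructor <;> nlinarith
    -- real part of w = 1 - γ + β z
    have hwre : (0.8 : ℝ) ≤ (1 - (γ : ℂ) + (β : ℂ) * z).re := by
      have : (1 - (γ : ℂ) + (β : ℂ) * z).re = 1 - γ + β * z.re := by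
        simp [Complex.add_re, Complex.sub_re, Complex.mul_re]
      rw [this]; nlinarith
    -- norm of Λ₁
    have hL1re : (0.4 : ℝ) ≤ (Lam1 α β γ t).re := by
      have h2 : (1 - (γ : ℂ) + (β : ℂ) * z).re + s.re = 2 * (Lam1 α β γ t).re := by
        rw [← Complex.add_re,
          show (1 - (γ : ℂ) + (β : ℂ) * z + s) = 2 * Lam1 α β γ t by
            rw [Lam1, ← hzdef, ← hsdef]; ring]
        simp [Complex.mul_re]
      nlinarith [hwre, hsre]
    have hL1norm : (0.4 : ℝ) ≤ ‖Lam1 α β γ t‖ := by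
      have := Complex.re_le_norm (Lam1 α β γ t)
      linarith
    have hL1ne : Lam1 α β γ t ≠ 0 := by
      intro h0
      rw [h0] at hL1norm; simp at hL1norm; linarith
    -- product identity
    have hprod : Lam1 α β γ t * Lam2 α β γ t = z * (c : ℂ) := by
      have hD := hs2
      rw [Dhat, ← hzdef, hcC] at hD
      rw [Lam1, Lam2, ← hzdef, ← hsdef]
      field_simp
      linear_combination (-(1 : ℂ)) * hD
    -- norm of Λ₂
    have hL2 : Lam2 α β γ t = z * (c : ℂ) / Lam1 α β γ t := by
      field_simp
      linear_combination hprod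
    have hL2norm : ‖Lam2 α β γ t‖ ≤ 0.375 := by
      rw [hL2, norm_div, norm_mul, hz, one_mul]
      calc ‖(c : ℂ)‖ / ‖Lam1 α β γ t‖ ≤ 0.15 / 0.4 :=
            div_le_div₀ (by norm_num) hcnorm (by norm_num) hL1norm
        _ = 0.375 := by norm_num
    -- lower bound on ‖Dhat‖
    have hid : Dhat α β γ t =
        (1 - (γ : ℂ) - (β : ℂ) * z) ^ 2 + 4 * (γ : ℂ) * z * (1 - (α : ℂ) - (β : ℂ)) := by
      rw [Dhat, ← hzdef]; ring
    have hare : (0.8 : ℝ) ≤ (1 - (γ : ℂ) - (β : ℂ) * z).re := by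
      have : (1 - (γ : ℂ) - (β : ℂ) * z).re = 1 - γ - β * z.re := by
        simp [Complex.sub_re, Complex.mul_re]
      rw [this]; nlinarith
    have hanorm : (0.8 : ℝ) ≤ ‖1 - (γ : ℂ) - (β : ℂ) * z‖ := by
      have := Complex.re_le_norm (1 - (γ : ℂ) - (β : ℂ) * z)
      linarith
    have hbnorm : ‖4 * (γ : ℂ) * z * (1 - (α : ℂ) - (β : ℂ))‖ ≤ 0.2 := by
      have h1 : (4 : ℂ) * (γ : ℂ) * z * (1 - (α : ℂ) - (β : ℂ))
          = ((4 * γ : ℝ) : ℂ) * z * (((1 - α - β : ℝ)) : ℂ) := by push_cast; ring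
      rw [h1, norm_mul, norm_mul, hz, Complex.norm_real, Complex.norm_real,
        Real.norm_eq_abs, Real.norm_eq_abs,
        _root_.abs_of_nonneg (show (0:ℝ) ≤ 4 * γ by positivity),
        _root_.abs_of_nonneg (show (0:ℝ) ≤ 1 - α - β by linarith)]
      nlinarith
    have hDnorm : (0.44 : ℝ) ≤ ‖Dhat α β γ t‖ := by
      rw [hid]
      have := norm_sub_norm_le ((1 - (γ : ℂ) - (β : ℂ) * z) ^ 2)
        (-(4 * (γ : ℂ) * z * (1 - (α : ℂ) - (β : ℂ))))
      rw [sub_neg_eq_add, norm_neg] at this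
      have hsq : (0.64 : ℝ) ≤ ‖(1 - (γ : ℂ) - (β : ℂ) * z) ^ 2‖ := by
        rw [norm_pow]; nlinarith
      linarith
    -- lower bound on ‖s‖
    have hsnorm : (0.66 : ℝ) ≤ ‖s‖ := by
      have h1 : ‖s‖ ^ 2 = ‖Dhat α β γ t‖ := by rw [← norm_pow, hs2]
      nlinarith [norm_nonneg s]
    -- lower bound on denominator
    have hzdnorm : ‖z ^ d‖ = 1 := by rw [norm_pow, hz, one_pow]
    have hdiffnorm : (0.625 : ℝ) ≤ ‖Lam2 α β γ t - z ^ d‖ := by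
      have := norm_sub_norm_le (z ^ d) (Lam2 α β γ t)
      rw [← norm_neg (z ^ d - Lam2 α β γ t), neg_sub] at this
      linarith [hzdnorm ▸ this]
    have hdenom : (0.4125 : ℝ) ≤ ‖W2denom α β γ d t‖ := by
      rw [W2denom, norm_neg, norm_mul, hpow d, ← hsdef]
      nlinarith [norm_nonneg (Lam2 α β γ t - z ^ d)]
    -- numerator factorization
    set L : ℂ := Lam2 α β γ t with hLdef
    clear_value L
    set B : ℂ := (∑ j ∈ Finset.range (d + 1), z ^ j) * (c : ℂ)
      - (∑ j ∈ Finset.range d, z ^ j) * L + ((γ : ℂ) * L - (c : ℂ)) with hBdef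
    clear_value B
    have hWnum : Wnum α β γ d L t = (z - 1) * B := by
      rw [Wnum, hpow1, hpow d, hcC, ← hzdef, hBdef]
      have g1 := geom_sum_mul z (d + 1)
      have g2 := geom_sum_mul z d
      linear_combination (-(c : ℂ)) * g1 + L * g2 - (z - 1) * hcC
    -- bound on B
    have hS1 : ‖∑ j ∈ Finset.range (d + 1), z ^ j‖ ≤ (d : ℝ) + 1 := by
      calc ‖∑ j ∈ Finset.range (d + 1), z ^ j‖ ≤ ∑ j ∈ Finset.range (d + 1), ‖z ^ j‖ :=
            norm_sum_le _ _
        _ = (d : ℝ) + 1 := by simp [norm_pow, hz]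
    have hS2 : ‖∑ j ∈ Finset.range d, z ^ j‖ ≤ (d : ℝ) := by
      calc ‖∑ j ∈ Finset.range d, z ^ j‖ ≤ ∑ j ∈ Finset.range d, ‖z ^ j‖ := norm_sum_le _ _
        _ = (d : ℝ) := by simp [norm_pow, hz]
    have hγnorm : ‖(γ : ℂ)‖ ≤ 0.05 := by
      rw [Complex.norm_real, Real.norm_eq_abs, abs_of_pos hγ]; exact hγ05
    have hB : ‖B‖ ≤ 0.525 * (d : ℝ) + 0.31875 := by
      have t1 : ‖(∑ j ∈ Finset.range (d + 1), z ^ j) * (c : ℂ)‖ ≤ ((d : ℝ) + 1) * 0.15 := by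
        rw [norm_mul]
        exact mul_le_mul hS1 hcnorm (norm_nonneg _) (by positivity)
      have t2 : ‖(∑ j ∈ Finset.range d, z ^ j) * L‖ ≤ (d : ℝ) * 0.375 := by
        rw [norm_mul]
        exact mul_le_mul hS2 hL2norm (norm_nonneg _) (Nat.cast_nonneg d)
      have t3 : ‖(γ : ℂ) * L - (c : ℂ)‖ ≤ 0.05 * 0.375 + 0.15 := by
        calc ‖(γ : ℂ) * L - (c : ℂ)‖ ≤ ‖(γ : ℂ) * L‖ + ‖(c : ℂ)‖ := norm_sub_le _ _
          _ ≤ 0.05 * 0.375 + 0.15 := by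
              rw [norm_mul]
              have := mul_le_mul hγnorm hL2norm (norm_nonneg _) (by norm_num)
              linarith
      calc ‖B‖ ≤ ‖(∑ j ∈ Finset.range (d + 1), z ^ j) * (c : ℂ)
              - (∑ j ∈ Finset.range d, z ^ j) * L‖ + ‖(γ : ℂ) * L - (c : ℂ)‖ := by
            rw [hBdef]; exact norm_add_le _ _
        _ ≤ ‖(∑ j ∈ Finset.range (d + 1), z ^ j) * (c : ℂ)‖
              + ‖(∑ j ∈ Finset.range d, z ^ j) * L‖ + ‖(γ : ℂ) * L - (c : ℂ)‖ := by
            linarith [norm_sub_le ((∑ j ∈ Finset.range (d + 1), z ^ j) * (c : ℂ))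
              ((∑ j ∈ Finset.range d, z ^ j) * L)]
        _ ≤ 0.525 * (d : ℝ) + 0.31875 := by linarith
    -- conclude
    rw [W2, norm_div, ← hLdef, hWnum, norm_mul]
    rw [div_le_iff₀ (lt_of_lt_of_le (by norm_num) hdenom)]
    have key : ‖B‖ ≤ 2 * ((d : ℝ) + 1) * ‖W2denom α β γ d t‖ := by
      nlinarith [Nat.cast_nonneg (α := ℝ) d]
    nlinarith [norm_nonneg (z - 1), norm_nonneg B,
      mul_le_mul_of_nonneg_left key (norm_nonneg (z - 1))]
  · -- degenerate case: sqrtD = 0, denominator is 0, W2 = 0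
    have hs0 : sqrtD α β γ t = 0 := by rw [sqrtD, dif_neg hex]
    have h0 : W2 α β γ d t = 0 := by
      rw [W2, W2denom, hs0]; simp
    rw [h0, norm_zero]
    positivity
end
end

section
/- There exists a constant C > 0 depending only on C₀ such that for every t with |t| ≤ π, |Â(t)| ≤ 1 + Cγ(Re Ĥ(t) − 1 − α). Moreover, for every fixed C₂ > 0, if additionally α ≥ C₂ then there exists a constant C' > 0 depending only on C₀ and C₂ such that |Δ̂₁(t)| ≤ 1 − C'γ for all t with |t| ≤ π. -/
open Complex

noncomputable section

section Stmt7Aux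

lemma div_bound {num Dp S c r k : ℝ} (hS : 0 ≤ S) (hnum : num ≤ c*S)
    (hr : 0 < r) (hD : r ≤ Dp) (hc : 0 ≤ c) (hk : c ≤ k*r) :
    num/Dp ≤ k*S := by
  have h1 : num/Dp ≤ c*S/r := div_le_div₀ (mul_nonneg hc hS) hnum hr hD
  have h2 : c*S/r ≤ k*S := by
    rw [div_le_iff₀ hr]; nlinarith
  linarith

lemma pow_lb2 {D : ℝ} (h : (0.85:ℝ) ≤ D) : (0.7225:ℝ) ≤ D^2 := by nlinarith
lemma pow_lb3 {D : ℝ} (h : (0.85:ℝ) ≤ D) : (0.614125:ℝ) ≤ D^3 := by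
  have h2 := pow_lb2 h
  nlinarith
lemma pow_lb4 {D : ℝ} (h : (0.85:ℝ) ≤ D) : (0.52200625:ℝ) ≤ D^4 := by
  have h2 := pow_lb2 h
  have h3 := pow_lb3 h
  nlinarith
lemma pow_lb5 {D : ℝ} (h : (0.85:ℝ) ≤ D) : (0.4437053125:ℝ) ≤ D^5 := by
  have h2 := pow_lb2 h
  have h4 := pow_lb4 h
  nlinarith
lemma mul_lb {a b x y : ℝ} (ha : 0 < a) (h1 : a ≤ x) (hb : 0 < b) (h2 : b ≤ y) :
    a*b ≤ x*y := by nlinarith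


section
variable {α β x Hn Pn : ℝ}

lemma Lsq_bound (hα0 : 0 < α) (hα1 : α < 1) (h1αβ : 0 < 1-α-β) (hβ0 : 0 < β)
    (hHn0 : 0 ≤ Hn) (hHnsq : Hn^2 ≤ 2*x) :
    ((1-α-β)*Hn + α)^2 ≤ 4*((1-α-β)*x + α) := by
  nlinarith [sq_nonneg ((1-α-β)*Hn - α), mul_le_mul_of_nonneg_left hHnsq h1αβ.le,
    mul_nonneg (mul_nonneg h1αβ.le (by linarith : (0:ℝ) ≤ α+β)) (sq_nonneg Hn)]

lemma HnL_bound (hα0 : 0 < α) (h1αβ : 0 < 1-α-β)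
    (hHn0 : 0 ≤ Hn) (hHn2 : Hn ≤ 2) (hHnsq : Hn^2 ≤ 2*x) :
    Hn*((1-α-β)*Hn + α) ≤ 2*((1-α-β)*x + α) := by
  nlinarith [mul_le_mul_of_nonneg_left hHnsq h1αβ.le,
    mul_le_mul_of_nonneg_left hHn2 hα0.le]

lemma num2_bound (hα0 : 0 < α) (h1αβ : 0 < 1-α-β) (hβ0 : 0 < β) (hβ : β ≤ 0.15)
    (hHn0 : 0 ≤ Hn) (hHn2 : Hn ≤ 2) (hPn0 : 0 ≤ Pn) (hHnsq : Hn^2 ≤ 2*x) (hx0 : 0 ≤ x)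
    (hψL : (1-β)*Pn ≤ (1-α-β)*Hn + α) :
    β*(1-β)*Hn*Pn ≤ 0.3*((1-α-β)*x + α) := by
  have hS0 : 0 ≤ (1-α-β)*x + α := by nlinarith
  have hHnL := HnL_bound hα0 h1αβ hHn0 hHn2 hHnsq
  have e0 : β*(Hn*((1-β)*Pn)) ≤ β*(Hn*((1-α-β)*Hn + α)) :=
    mul_le_mul_of_nonneg_left (mul_le_mul_of_nonneg_left hψL hHn0) hβ0.le
  have e1 : β*(Hn*((1-α-β)*Hn + α)) ≤ β*(2*((1-α-β)*x + α)) :=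
    mul_le_mul_of_nonneg_left hHnL hβ0.le
  have e2 : β*(2*((1-α-β)*x + α)) ≤ 0.15*(2*((1-α-β)*x + α)) :=
    mul_le_mul_of_nonneg_right hβ (by linarith)
  have expand : β*(1-β)*Hn*Pn = β*(Hn*((1-β)*Pn)) := by ring
  linarith [e0, e1, e2]

lemma num3_bound (hα0 : 0 < α) (h1αβ : 0 < 1-α-β) (hβ0 : 0 < β) (hβ : β ≤ 0.15)
    (hHn0 : 0 ≤ Hn) (hHn2 : Hn ≤ 2) (hPn0 : 0 ≤ Pn) (hHnsq : Hn^2 ≤ 2*x) (hx0 : 0 ≤ x)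
    (hψL : (1-β)*Pn ≤ (1-α-β)*Hn + α) :
    β^2*(1-β)*Hn^2*Pn ≤ 0.09*((1-α-β)*x + α) := by
  have hS0 : 0 ≤ (1-α-β)*x + α := by nlinarith
  have hHnL := HnL_bound hα0 h1αβ hHn0 hHn2 hHnsq
  have hβsq : β^2 ≤ 0.0225 := by nlinarith
  have e0 : β^2*(Hn*(Hn*((1-β)*Pn))) ≤ β^2*(Hn*(Hn*((1-α-β)*Hn + α))) :=
    mul_le_mul_of_nonneg_left
      (mul_le_mul_of_nonneg_left (mul_le_mul_of_nonneg_left hψL hHn0) hHn0) (sq_nonneg β)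
  have e1 : β^2*(Hn*(Hn*((1-α-β)*Hn + α))) ≤ β^2*(Hn*(2*((1-α-β)*x + α))) :=
    mul_le_mul_of_nonneg_left (mul_le_mul_of_nonneg_left hHnL hHn0) (sq_nonneg β)
  have e2 : β^2*(Hn*(2*((1-α-β)*x + α))) ≤ β^2*(2*(2*((1-α-β)*x + α))) :=
    mul_le_mul_of_nonneg_left (mul_le_mul_of_nonneg_right hHn2 (by linarith)) (sq_nonneg β)
  have e3 : β^2*(2*(2*((1-α-β)*x + α))) ≤ 0.0225*(2*(2*((1-α-β)*x + α))) :=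
    mul_le_mul_of_nonneg_right hβsq (by linarith)
  have expand : β^2*(1-β)*Hn^2*Pn = β^2*(Hn*(Hn*((1-β)*Pn))) := by ring
  linarith [e0, e1, e2, e3]

lemma num4_bound (hα0 : 0 < α) (hα1 : α < 1) (h1αβ : 0 < 1-α-β) (hβ0 : 0 < β) (hβ : β ≤ 0.15)
    (hHn0 : 0 ≤ Hn) (hPn0 : 0 ≤ Pn) (hHnsq : Hn^2 ≤ 2*x) (hx0 : 0 ≤ x)
    (hψL : (1-β)*Pn ≤ (1-α-β)*Hn + α) :
    (1-β)^3*Pn^2 ≤ 4*((1-α-β)*x + α) := by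
  have hLPn0 : 0 ≤ (1-β)*Pn := mul_nonneg (by linarith) hPn0
  have hsq : ((1-β)*Pn)^2 ≤ ((1-α-β)*Hn + α)^2 := pow_le_pow_left₀ hLPn0 hψL 2
  have hLsq := Lsq_bound hα0 hα1 h1αβ hβ0 hHn0 hHnsq
  nlinarith [sq_nonneg ((1-β)*Pn), sq_nonneg Pn]

lemma num5_bound (hα0 : 0 < α) (hα1 : α < 1) (h1αβ : 0 < 1-α-β) (hβ0 : 0 < β) (hβ : β ≤ 0.15)
    (hHn0 : 0 ≤ Hn) (hHn2 : Hn ≤ 2) (hPn0 : 0 ≤ Pn) (hHnsq : Hn^2 ≤ 2*x) (hx0 : 0 ≤ x)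
    (hψL : (1-β)*Pn ≤ (1-α-β)*Hn + α) :
    3*β*(1-β)^3*Pn^2*Hn ≤ 1.8*((1-α-β)*x + α) := by
  have hS0 : 0 ≤ (1-α-β)*x + α := by nlinarith
  have hL0 : 0 ≤ (1-α-β)*Hn + α := by nlinarith
  have hL2 : (1-α-β)*Hn + α ≤ 2 := by nlinarith
  have hHnL := HnL_bound hα0 h1αβ hHn0 hHn2 hHnsq
  have hLPn0 : 0 ≤ (1-β)*Pn := mul_nonneg (by linarith) hPn0
  have hsq : ((1-β)*Pn)^2 ≤ ((1-α-β)*Hn + α)^2 := pow_le_pow_left₀ hLPn0 hψL 2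
  have hL2Hn : ((1-α-β)*Hn + α)^2*Hn ≤ 4*((1-α-β)*x + α) := by
    have h1 : ((1-α-β)*Hn + α)*(Hn*((1-α-β)*Hn + α))
        ≤ ((1-α-β)*Hn + α)*(2*((1-α-β)*x + α)) :=
      mul_le_mul_of_nonneg_left hHnL hL0
    have h2 : ((1-α-β)*Hn + α)*(2*((1-α-β)*x + α)) ≤ 2*(2*((1-α-β)*x + α)) :=
      mul_le_mul_of_nonneg_right hL2 (by linarith)
    nlinarith
  have hnum53 : (1-β)^3*Pn^2 ≤ ((1-α-β)*Hn + α)^2 := by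
    nlinarith [sq_nonneg ((1-β)*Pn)]
  have e0 : 3*(β*(((1-β)^3*Pn^2)*Hn)) ≤ 3*(β*(((1-α-β)*Hn + α)^2*Hn)) := by
    have h1 := mul_le_mul_of_nonneg_right hnum53 hHn0
    have h2 := mul_le_mul_of_nonneg_left h1 hβ0.le
    linarith
  have e1 : β*(((1-α-β)*Hn + α)^2*Hn) ≤ 0.15*(((1-α-β)*Hn + α)^2*Hn) :=
    mul_le_mul_of_nonneg_right hβ (by positivity)
  have e2 : 0.15*(((1-α-β)*Hn + α)^2*Hn) ≤ 0.15*(4*((1-α-β)*x + α)) := by linarith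
  have expand : 3*β*(1-β)^3*Pn^2*Hn = 3*(β*(((1-β)^3*Pn^2)*Hn)) := by ring
  linarith [e0, e1, e2]

lemma num6_bound (hα0 : 0 < α) (hα1 : α < 1) (h1αβ : 0 < 1-α-β) (hβ0 : 0 < β) (hβ : β ≤ 0.15)
    (hHn0 : 0 ≤ Hn) (hHn2 : Hn ≤ 2) (hPn0 : 0 ≤ Pn) (hHnsq : Hn^2 ≤ 2*x) (hx0 : 0 ≤ x)
    (hψL : (1-β)*Pn ≤ (1-α-β)*Hn + α) :
    2*(1-β)^5*Pn^3 ≤ 16*((1-α-β)*x + α) := by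
  have hS0 : 0 ≤ (1-α-β)*x + α := by nlinarith
  have hL0 : 0 ≤ (1-α-β)*Hn + α := by nlinarith
  have hL2 : (1-α-β)*Hn + α ≤ 2 := by nlinarith
  have hLsq := Lsq_bound hα0 hα1 h1αβ hβ0 hHn0 hHnsq
  have hL3 : ((1-α-β)*Hn + α)^3 ≤ 8*((1-α-β)*x + α) := by nlinarith [hLsq]
  have hLPn0 : 0 ≤ (1-β)*Pn := mul_nonneg (by linarith) hPn0
  have hcube : ((1-β)*Pn)^3 ≤ ((1-α-β)*Hn + α)^3 := pow_le_pow_left₀ hLPn0 hψL 3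
  have h1 : (1-β)^5*Pn^3 = (1-β)^2*((1-β)*Pn)^3 := by ring
  have h2 : (1-β)^2*((1-β)*Pn)^3 ≤ 1*((1-β)*Pn)^3 :=
    mul_le_mul_of_nonneg_right (by nlinarith) (pow_nonneg hLPn0 3)
  linarith [h2, hcube, hL3, h1]

lemma first_order_bound {γ S D nA1 L : ℝ} (hγ0 : 0 < γ) (hγ : γ ≤ 0.05) (hS0 : 0 ≤ S)
    (hL0 : 0 ≤ L) (hD85 : (0.85:ℝ) ≤ D) (hD105 : D ≤ 1.05)
    (hLsq : L^2 ≤ 4*S) (hN : nA1 ≤ L/D) (hN0 : 0 ≤ nA1) :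
    1 + (-S/D)*γ + (nA1*γ)^2/2 ≤ 1 - 0.8*(γ*S) := by
  have hD0 : (0:ℝ) < D := by linarith
  have hD2 : (0.7225:ℝ) ≤ D^2 := by nlinarith
  have h2 : nA1^2 ≤ (4*S)/0.7225 := by
    have ha : nA1^2 ≤ (L/D)^2 := pow_le_pow_left₀ hN0 hN 2
    have hb : (L/D)^2 = L^2/D^2 := by ring
    have hc : L^2/D^2 ≤ (4*S)/0.7225 := div_le_div₀ (by linarith) hLsq (by norm_num) hD2
    rw [hb] at ha; linarith
  have hSD : S/1.05 ≤ S/D := by gcongr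
  have h3 : (-S/D)*γ ≤ -(S/1.05)*γ := by
    have h := mul_le_mul_of_nonneg_right hSD hγ0.le
    have e : (-S/D)*γ = -(S/D*γ) := by ring
    have e2 : -(S/1.05)*γ = -(S/1.05*γ) := by ring
    rw [e, e2]; linarith
  have h4 : (nA1*γ)^2/2 ≤ ((4*S)/0.7225)*γ^2/2 := by
    nlinarith [mul_le_mul_of_nonneg_right h2 (sq_nonneg γ)]
  have h5 : ((4*S)/0.7225)*γ^2/2 ≤ ((4*S)/0.7225)*(0.05*γ)/2 := by
    have hc : 0 ≤ (4*S)/0.7225 := by positivity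
    nlinarith [mul_le_mul_of_nonneg_left (mul_le_mul_of_nonneg_right hγ hγ0.le) hc]
  have h6 : -(S/1.05)*γ + ((4*S)/0.7225)*(0.05*γ)/2 ≤ -0.8*(γ*S) := by
    have e1 : -(S/1.05)*γ = -(20/21)*(γ*S) := by ring
    have e2 : ((4*S)/0.7225)*(0.05*γ)/2 = (4*0.05/(0.7225*2))*(γ*S) := by ring
    rw [e1, e2]
    nlinarith [mul_nonneg hγ0.le hS0]
  linarith

lemma final_combine {γ S T1 T24 T356 : ℝ} (hγ0 : 0 < γ) (hγ : γ ≤ 0.05) (hS0 : 0 ≤ S)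
    (h1 : T1 ≤ 1 - 0.8*(γ*S)) (h24 : T24 ≤ 8.12*S) (h356 : T356 ≤ 54.25*S)
    (hT24 : 0 ≤ T24) (hT356 : 0 ≤ T356) :
    T1 + T24*γ^2 + T356*γ^3 ≤ 1 - γ*S/4 ∧ T1 + T24*γ^2 ≤ 1 - γ*S/3 := by
  have k24 : T24*γ^2 ≤ 0.41*(γ*S) := by
    nlinarith [mul_le_mul_of_nonneg_right h24 (sq_nonneg γ),
      mul_nonneg (mul_nonneg (by linarith : (0:ℝ) ≤ 0.05-γ) hγ0.le) hS0]
  have hγsq : γ^2 ≤ 0.0025 := by nlinarith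
  have k356 : T356*γ^3 ≤ 0.14*(γ*S) := by
    nlinarith [mul_le_mul_of_nonneg_right h356 (pow_nonneg hγ0.le 3),
      mul_nonneg (mul_nonneg (by linarith : (0:ℝ) ≤ 0.0025-γ^2) hγ0.le) hS0]
  have hgs : 0 ≤ γ*S := mul_nonneg hγ0.le hS0
  exact ⟨by linarith, by linarith⟩
end

lemma norm_one_add_le' (z : ℂ) : ‖1 + z‖ ≤ 1 + z.re + ‖z‖^2/2 := by
  have h1 : ‖1 + z‖^2 = 1 + 2*z.re + ‖z‖^2 := by
    rw [Complex.sq_norm, Complex.sq_norm]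
    simp [Complex.normSq_apply]; ring
  have h2 : |z.re| ≤ ‖z‖ := Complex.abs_re_le_norm z
  have h3 : 0 ≤ ‖1 + z‖ := norm_nonneg _
  nlinarith [sq_nonneg (z.re + ‖z‖^2/2), sq_nonneg (‖z‖ - 1), neg_abs_le z.re]

set_option maxHeartbeats 1000000 in
lemma key_bounds (α β γ : ℝ) (hα0 : 0 < α) (hα1 : α < 1) (hβ0 : 0 < β)
    (hβ : β ≤ 0.15) (hγ0 : 0 < γ) (hγ : γ ≤ 0.05) (hαβ : α + β < 1) (t : ℝ) :
    0 ≤ 1 - (Hhat β t).re ∧ 1 - (Hhat β t).re ≤ 2 ∧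
    ‖Ahat α β γ t‖ ≤ 1 - γ * ((1-α-β) * (1 - (Hhat β t).re) + α) / 4 ∧
    ‖Delta1Hat α β γ t‖ ≤ 1 - γ * ((1-α-β) * (1 - (Hhat β t).re) + α) / 3 := by
  have h1αβ : 0 < 1-α-β := by linarith
  have he : ‖eit t‖ = 1 := by
    simp [eit, expi, Complex.norm_exp]
  have hnβ : ‖(β:ℂ)‖ = β := by
    rw [Complex.norm_real, Real.norm_eq_abs]; exact abs_of_nonneg hβ0.le
  have hn1β : ‖1 - (β:ℂ)‖ = 1 - β := by
    rw [show (1 - (β:ℂ)) = ((1-β:ℝ):ℂ) by push_cast; ring, Complex.norm_real,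
      Real.norm_eq_abs]
    exact abs_of_nonneg (by linarith)
  have hnD : ‖1 + (γ:ℂ) - (β:ℂ)‖ = 1 + γ - β := by
    rw [show (1 + (γ:ℂ) - (β:ℂ)) = ((1+γ-β:ℝ):ℂ) by push_cast; ring, Complex.norm_real,
      Real.norm_eq_abs]
    exact abs_of_nonneg (by linarith)
  have hq1 : 1 - β ≤ ‖1 - (β:ℂ) * eit t‖ := by
    have h := norm_sub_norm_le (1:ℂ) ((β:ℂ) * eit t)
    rwa [norm_one, norm_mul, hnβ, he, mul_one] at h
  have hq0 : (1 - (β:ℂ) * eit t) ≠ 0 := by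
    intro h
    rw [h, norm_zero] at hq1; linarith
  have hQ0 : (0:ℝ) < ‖1 - (β:ℂ) * eit t‖ := by linarith
  have hQ85 : (0.85:ℝ) ≤ ‖1 - (β:ℂ) * eit t‖ := by linarith
  have hHle : ‖Hhat β t‖ ≤ 1 := by
    rw [Hhat, norm_div, norm_mul, hn1β, he, mul_one, div_le_one hQ0]
    linarith
  have hx0 : 0 ≤ 1 - (Hhat β t).re := by
    have h1 : (Hhat β t).re ≤ ‖Hhat β t‖ := Complex.re_le_norm _
    linarith
  have hx2 : 1 - (Hhat β t).re ≤ 2 := by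
    have h1 : |(Hhat β t).re| ≤ ‖Hhat β t‖ := Complex.abs_re_le_norm _
    have h2 := neg_abs_le (Hhat β t).re
    linarith
  have hHn0 : 0 ≤ ‖Hhat β t - 1‖ := norm_nonneg _
  have hHn2 : ‖Hhat β t - 1‖ ≤ 2 := by
    have h := norm_sub_le (Hhat β t) 1
    rw [norm_one] at h; linarith
  have hHnsq : ‖Hhat β t - 1‖^2 ≤ 2*(1 - (Hhat β t).re) := by
    have h1 : ‖Hhat β t - 1‖^2 = Complex.normSq (Hhat β t - 1) := by
      rw [Complex.sq_norm]
    have h2 : Complex.normSq (Hhat β t - 1)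
        = Complex.normSq (Hhat β t) - 2*(Hhat β t).re + 1 := by
      simp [Complex.normSq_apply, Complex.sub_re, Complex.sub_im]; ring
    have h3 : Complex.normSq (Hhat β t) ≤ 1 := by
      rw [← Complex.sq_norm]
      exact pow_le_one₀ (norm_nonneg _) hHle
    linarith
  have hψid : (1 - (β:ℂ)) * (Psihat α β t - 1)
      = ((1-α-β:ℝ):ℂ) * (Hhat β t - 1) - ((α:ℝ):ℂ) := by
    rw [Hhat, Psihat]
    field_simp
    push_cast
    ring
  have hPn0 : 0 ≤ ‖Psihat α β t - 1‖ := norm_nonneg _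
  have hψL : (1-β) * ‖Psihat α β t - 1‖ ≤ (1-α-β) * ‖Hhat β t - 1‖ + α := by
    have h1 : ‖(1 - (β:ℂ)) * (Psihat α β t - 1)‖
        ≤ (1-α-β) * ‖Hhat β t - 1‖ + α := by
      rw [hψid]
      refine (norm_sub_le _ _).trans ?_
      rw [norm_mul, Complex.norm_real, Complex.norm_real, Real.norm_eq_abs,
        Real.norm_eq_abs, _root_.abs_of_nonneg (le_of_lt h1αβ), _root_.abs_of_nonneg hα0.le]
    rwa [norm_mul, hn1β] at h1
  have hD85 : (0.85:ℝ) ≤ 1+γ-β := by linarith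
  have hD105 : 1+γ-β ≤ 1.05 := by linarith
  have hD0 : (0:ℝ) < 1+γ-β := by linarith
  -- A1
  have hA1eq : A1 α β γ t
      = (((1-α-β:ℝ):ℂ) * (Hhat β t - 1) - ((α:ℝ):ℂ)) / ((1+γ-β:ℝ):ℂ) := by
    rw [A1, ← hψid]
    congr 1
    push_cast
    ring
  have hA1re : (A1 α β γ t).re
      = -((1-α-β)*(1 - (Hhat β t).re) + α)/(1+γ-β) := by
    rw [hA1eq, Complex.div_ofReal_re]
    have h1 : ((((1-α-β:ℝ)):ℂ) * (Hhat β t - 1) - ((α:ℝ):ℂ)).re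
        = (1-α-β)*((Hhat β t).re - 1) - α := by simp
    rw [h1]
    ring
  have hA1n : ‖A1 α β γ t‖ ≤ ((1-α-β)*‖Hhat β t - 1‖ + α)/(1+γ-β) := by
    rw [A1, norm_div, norm_mul, hn1β, hnD]
    exact (div_le_div_iff_of_pos_right hD0).mpr hψL
  -- norms of A2..A6
  have h3n : ‖(3:ℂ)‖ = 3 := by norm_num
  have h2n : ‖(2:ℂ)‖ = 2 := by norm_num
  have hA2n : ‖A2 α β γ t‖
      = β*(1-β)*‖Hhat β t - 1‖*‖Psihat α β t - 1‖/(1+γ-β)^2 := by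
    simp only [A2, norm_div, norm_neg, norm_mul, norm_pow, hnβ, hn1β, hnD]
  have hA3n : ‖A3 α β γ t‖
      = β^2*(1-β)*‖Hhat β t - 1‖^2*‖Psihat α β t - 1‖/(1+γ-β)^3 := by
    simp only [A3, norm_div, norm_mul, norm_pow, hnβ, hn1β, hnD]
  have hA4n : ‖A4 α β γ t‖
      = (1-β)^3*‖Psihat α β t - 1‖^2/((1+γ-β)^3*‖1 - (β:ℂ)*eit t‖) := by
    simp only [A4, norm_div, norm_neg, norm_mul, norm_pow, hn1β, hnD]
  have hA5n : ‖A5 α β γ t‖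
      = 3*β*(1-β)^3*‖Psihat α β t - 1‖^2*‖Hhat β t - 1‖/((1+γ-β)^4*‖1 - (β:ℂ)*eit t‖) := by
    simp only [A5, norm_div, norm_mul, norm_pow, hnβ, hn1β, hnD, h3n]
  have hA6n : ‖A6 α β γ t‖
      = 2*(1-β)^5*‖Psihat α β t - 1‖^3/((1+γ-β)^5*‖1 - (β:ℂ)*eit t‖^2) := by
    simp only [A6, norm_div, norm_mul, norm_pow, hn1β, hnD, h2n]
  -- term bounds
  have hS0 : 0 ≤ (1-α-β)*(1 - (Hhat β t).re) + α := by
    have := mul_nonneg h1αβ.le hx0; linarith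
  have hb2 : ‖A2 α β γ t‖ ≤ 0.42*((1-α-β)*(1 - (Hhat β t).re) + α) := by
    rw [hA2n]
    exact div_bound (r := 0.7225) (k := 0.42) hS0
      (num2_bound hα0 h1αβ hβ0 hβ hHn0 hHn2 hPn0 hHnsq hx0 hψL)
      (by norm_num) (pow_lb2 hD85) (by norm_num) (by norm_num)
  have hb3 : ‖A3 α β γ t‖ ≤ 0.15*((1-α-β)*(1 - (Hhat β t).re) + α) := by
    rw [hA3n]
    exact div_bound (r := 0.614125) (k := 0.15) hS0
      (num3_bound hα0 h1αβ hβ0 hβ hHn0 hHn2 hPn0 hHnsq hx0 hψL)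
      (by norm_num) (pow_lb3 hD85) (by norm_num) (by norm_num)
  have hb4 : ‖A4 α β γ t‖ ≤ 7.7*((1-α-β)*(1 - (Hhat β t).re) + α) := by
    rw [hA4n]
    refine div_bound (r := 0.52200625) (k := 7.7) hS0
      (num4_bound hα0 hα1 h1αβ hβ0 hβ hHn0 hPn0 hHnsq hx0 hψL)
      (by norm_num) ?_ (by norm_num) (by norm_num)
    calc (0.52200625:ℝ) = 0.614125*0.85 := by norm_num
    _ ≤ (1+γ-β)^3*‖1 - (β:ℂ)*eit t‖ :=
      mul_lb (by norm_num) (pow_lb3 hD85) (by norm_num) hQ85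
  have hb5 : ‖A5 α β γ t‖ ≤ 4.1*((1-α-β)*(1 - (Hhat β t).re) + α) := by
    rw [hA5n]
    refine div_bound (r := 0.4437053125) (k := 4.1) hS0
      (num5_bound hα0 hα1 h1αβ hβ0 hβ hHn0 hHn2 hPn0 hHnsq hx0 hψL)
      (by norm_num) ?_ (by norm_num) (by norm_num)
    calc (0.4437053125:ℝ) = 0.52200625*0.85 := by norm_num
    _ ≤ (1+γ-β)^4*‖1 - (β:ℂ)*eit t‖ :=
      mul_lb (by norm_num) (pow_lb4 hD85) (by norm_num) hQ85
  have hb6 : ‖A6 α β γ t‖ ≤ 50*((1-α-β)*(1 - (Hhat β t).re) + α) := by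
    rw [hA6n]
    refine div_bound (r := 0.32057708828125) (k := 50) hS0
      (num6_bound hα0 hα1 h1αβ hβ0 hβ hHn0 hHn2 hPn0 hHnsq hx0 hψL)
      (by norm_num) ?_ (by norm_num) (by norm_num)
    calc (0.32057708828125:ℝ) = 0.4437053125*0.7225 := by norm_num
    _ ≤ (1+γ-β)^5*‖1 - (β:ℂ)*eit t‖^2 :=
      mul_lb (by norm_num) (pow_lb5 hD85) (by norm_num) (pow_lb2 hQ85)
  -- first order bound
  have hγc : ‖(γ:ℂ)‖ = γ := by
    rw [Complex.norm_real, Real.norm_eq_abs]; exact abs_of_nonneg hγ0.le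
  have hb1 : ‖1 + A1 α β γ t * (γ:ℂ)‖
      ≤ 1 - 0.8*(γ*((1-α-β)*(1 - (Hhat β t).re) + α)) := by
    have h0 := norm_one_add_le' (A1 α β γ t * (γ:ℂ))
    have hre : (A1 α β γ t * (γ:ℂ)).re = (A1 α β γ t).re * γ := by simp
    have hnn : ‖A1 α β γ t * (γ:ℂ)‖ = ‖A1 α β γ t‖ * γ := by
      rw [norm_mul, hγc]
    rw [hre, hnn, hA1re] at h0
    have hLsq := Lsq_bound hα0 hα1 h1αβ hβ0 hHn0 hHnsq
    have hL0 : 0 ≤ (1-α-β)*‖Hhat β t - 1‖ + α := by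
      have := mul_nonneg h1αβ.le hHn0; linarith
    have := first_order_bound hγ0 hγ hS0 hL0 hD85 hD105 hLsq hA1n (norm_nonneg _)
    linarith
  -- triangle inequality
  have e24 : ‖A2 α β γ t + A4 α β γ t‖ ≤ ‖A2 α β γ t‖ + ‖A4 α β γ t‖ := norm_add_le _ _
  have e356 : ‖A3 α β γ t + A5 α β γ t + A6 α β γ t‖
      ≤ ‖A3 α β γ t‖ + ‖A5 α β γ t‖ + ‖A6 α β γ t‖ := by
    calc ‖A3 α β γ t + A5 α β γ t + A6 α β γ t‖
        ≤ ‖A3 α β γ t + A5 α β γ t‖ + ‖A6 α β γ t‖ := norm_add_le _ _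
    _ ≤ ‖A3 α β γ t‖ + ‖A5 α β γ t‖ + ‖A6 α β γ t‖ := by
        linarith [norm_add_le (A3 α β γ t) (A5 α β γ t)]
  have hcomb := final_combine (T1 := ‖1 + A1 α β γ t * (γ:ℂ)‖)
    (T24 := ‖A2 α β γ t + A4 α β γ t‖) (T356 := ‖A3 α β γ t + A5 α β γ t + A6 α β γ t‖)
    hγ0 hγ hS0 hb1 (by linarith) (by linarith) (norm_nonneg _) (norm_nonneg _)
  have htriA : ‖Ahat α β γ t‖ ≤ ‖1 + A1 α β γ t * (γ:ℂ)‖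
      + ‖A2 α β γ t + A4 α β γ t‖*γ^2
      + ‖A3 α β γ t + A5 α β γ t + A6 α β γ t‖*γ^3 := by
    rw [Ahat]
    have n2 : ‖(A2 α β γ t + A4 α β γ t) * (γ:ℂ)^2‖
        = ‖A2 α β γ t + A4 α β γ t‖*γ^2 := by rw [norm_mul, norm_pow, hγc]
    have n3 : ‖(A3 α β γ t + A5 α β γ t + A6 α β γ t) * (γ:ℂ)^3‖
        = ‖A3 α β γ t + A5 α β γ t + A6 α β γ t‖*γ^3 := by rw [norm_mul, norm_pow, hγc]
    calc ‖1 + A1 α β γ t * (γ:ℂ) + (A2 α β γ t + A4 α β γ t) * (γ:ℂ)^2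
          + (A3 α β γ t + A5 α β γ t + A6 α β γ t) * (γ:ℂ)^3‖
        ≤ ‖1 + A1 α β γ t * (γ:ℂ) + (A2 α β γ t + A4 α β γ t) * (γ:ℂ)^2‖
          + ‖(A3 α β γ t + A5 α β γ t + A6 α β γ t) * (γ:ℂ)^3‖ := norm_add_le _ _
    _ ≤ (‖1 + A1 α β γ t * (γ:ℂ)‖ + ‖(A2 α β γ t + A4 α β γ t) * (γ:ℂ)^2‖)
          + ‖(A3 α β γ t + A5 α β γ t + A6 α β γ t) * (γ:ℂ)^3‖ := by
        linarith [norm_add_le (1 + A1 α β γ t * (γ:ℂ)) ((A2 α β γ t + A4 α β γ t) * (γ:ℂ)^2)]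
    _ = ‖1 + A1 α β γ t * (γ:ℂ)‖ + ‖A2 α β γ t + A4 α β γ t‖*γ^2
          + ‖A3 α β γ t + A5 α β γ t + A6 α β γ t‖*γ^3 := by rw [n2, n3]
  have htriD : ‖Delta1Hat α β γ t‖ ≤ ‖1 + A1 α β γ t * (γ:ℂ)‖
      + ‖A2 α β γ t + A4 α β γ t‖*γ^2 := by
    rw [Delta1Hat]
    have n2 : ‖(A2 α β γ t + A4 α β γ t) * (γ:ℂ)^2‖
        = ‖A2 α β γ t + A4 α β γ t‖*γ^2 := by rw [norm_mul, norm_pow, hγc]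
    calc ‖1 + A1 α β γ t * (γ:ℂ) + (A2 α β γ t + A4 α β γ t) * (γ:ℂ)^2‖
        ≤ ‖1 + A1 α β γ t * (γ:ℂ)‖ + ‖(A2 α β γ t + A4 α β γ t) * (γ:ℂ)^2‖ := norm_add_le _ _
    _ = ‖1 + A1 α β γ t * (γ:ℂ)‖ + ‖A2 α β γ t + A4 α β γ t‖*γ^2 := by rw [n2]
  exact ⟨hx0, hx2, by linarith [hcomb.1], by linarith [hcomb.2]⟩

end Stmt7Aux

/-- `|Â(t)| ≤ 1 + Cγ(Re Ĥ(t) − 1 − α)`; moreover if `α ≥ C₂` then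
`|Δ̂₁(t)| ≤ 1 − C'γ`. -/
theorem stmt7 (C₀ : ℝ) (hC₀ : C₀ ∈ Set.Ioo (0 : ℝ) 1) :
    (∃ C > (0 : ℝ), ∀ α β γ : ℝ, condC C₀ α β γ → ∀ t : ℝ, |t| ≤ Real.pi →
      ‖Ahat α β γ t‖ ≤ 1 + C * γ * ((Hhat β t).re - 1 - α)) ∧
    (∀ C₂ > (0 : ℝ), ∃ C' > (0 : ℝ), ∀ α β γ : ℝ, condC C₀ α β γ → C₂ ≤ α →
      ∀ t : ℝ, |t| ≤ Real.pi → ‖Delta1Hat α β γ t‖ ≤ 1 - C' * γ) := by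
  obtain ⟨hC0, hC1⟩ := hC₀
  constructor
  · refine ⟨(1-C₀)/24, by linarith, ?_⟩
    rintro α β γ hcond t ht
    obtain ⟨hα0, hα1, hβ0, hβ1, hγ0, hγ1, hβ, hγ, hαC, hαβ⟩ := hcond
    obtain ⟨hx0, hx2, hA, -⟩ := key_bounds α β γ hα0 hα1 hβ0 hβ hγ0 hγ hαβ t
    have h1αβ : 0 < 1-α-β := by linarith
    have hS : (1-C₀)/6 * ((1 - (Hhat β t).re) + α)
        ≤ (1-α-β)*(1 - (Hhat β t).re) + α := by
      rcases le_or_gt ((1-C₀)/6) (1-α-β) with hcase | hcase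
      · have h1 : (1-C₀)/6 * (1 - (Hhat β t).re) ≤ (1-α-β)*(1 - (Hhat β t).re) :=
          mul_le_mul_of_nonneg_right hcase hx0
        have h2 : (1-C₀)/6 * α ≤ 1 * α :=
          mul_le_mul_of_nonneg_right (by linarith) hα0.le
        linarith [h1, h2]
      · have hc6 : (1-C₀)/6 ≤ 1/6 := by linarith
        have hcx : (1-C₀)/6 * (1 - (Hhat β t).re) ≤ (1/6) * 2 :=
          mul_le_mul hc6 hx2 hx0 (by norm_num)
        have hcα : (1-C₀)/6 * α ≤ (1/6) * 1 :=
          mul_le_mul hc6 hα1.le hα0.le (by norm_num)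
        have hprod : 0 ≤ (1-α-β)*(1 - (Hhat β t).re) := mul_nonneg h1αβ.le hx0
        linarith
    have hfinal : 1 - γ*((1-α-β)*(1 - (Hhat β t).re) + α)/4
        ≤ 1 + (1-C₀)/24*γ*((Hhat β t).re - 1 - α) := by
      have e : (1-C₀)/24*γ*((Hhat β t).re - 1 - α)
          = -(γ*((1-C₀)/6*((1 - (Hhat β t).re) + α)))/4 := by ring
      rw [e]
      have h3 := mul_le_mul_of_nonneg_left hS hγ0.le
      linarith
    linarith
  · rintro C₂ hC₂
    refine ⟨C₂/3, by linarith, ?_⟩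
    rintro α β γ hcond hC2α t ht
    obtain ⟨hα0, hα1, hβ0, hβ1, hγ0, hγ1, hβ, hγ, hαC, hαβ⟩ := hcond
    obtain ⟨hx0, -, -, hD⟩ := key_bounds α β γ hα0 hα1 hβ0 hβ hγ0 hγ hαβ t
    have h1αβ : 0 < 1-α-β := by linarith
    have hSα : α ≤ (1-α-β)*(1 - (Hhat β t).re) + α := by
      have := mul_nonneg h1αβ.le hx0; linarith
    have h2 : γ*C₂ ≤ γ*((1-α-β)*(1 - (Hhat β t).re) + α) :=
      mul_le_mul_of_nonneg_left (le_trans hC2α hSα) hγ0.le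
    linarith [hD, h2]
end
end
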